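/- arXiv:1010.0380 — 3 statements merged into one kernel-verified Lean document; each statement's English description precedes it below -/
import Mathlib

section
/- Let Φ : S → T be a unital completely positive surjection between operator systems. If Φ is a complete quotient map of operator spaces (i.e., each Φ_n maps the open unit ball of M_n(S) onto the open unit ball of M_n(T)), then Φ is a complete order quotient map. -/
open scoped TensorProduct Kronecker ComplexOrder Matrix

noncomputable section

/-- Conjugation `α X α*` of an operator-valued matrix by a scalar matrix. -/
def mconj {V : Type} [AddCommGroup V] [Module ℂ V] {m n : Type} [Fintype m]
    (α : Matrix n m ℂ) (X : Matrix m m V) : Matrix n n V :=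
  Matrix.of fun i j => ∑ k, ∑ l, (α i k * star (α j l)) • X k l

/-- Entrywise star (conjugate transpose) of an operator-valued matrix. -/
def mstar {V : Type} [AddCommGroup V] [StarAddMonoid V] {m n : Type}
    (X : Matrix m n V) : Matrix n m V :=
  Matrix.of fun i j => star (X j i)

/-- An abstract operator system: a matrix ordered complex ∗-vector space with an
Archimedean matrix order unit (Choi–Effros). -/
structure OpSys (V : Type) [AddCommGroup V] [Module ℂ V] [StarAddMonoid V]
    [StarModule ℂ V] : Type 1 where
  pos : ∀ (ι : Type) [Fintype ι] [DecidableEq ι], Set (Matrix ι ι V)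
  unit : V
  unit_star : star unit = unit
  pos_star : ∀ (ι : Type) [Fintype ι] [DecidableEq ι] (X : Matrix ι ι V),
    X ∈ pos ι → mstar X = X
  pos_add : ∀ (ι : Type) [Fintype ι] [DecidableEq ι] (X Y : Matrix ι ι V),
    X ∈ pos ι → Y ∈ pos ι → X + Y ∈ pos ι
  pos_conj : ∀ (ι κ : Type) [Fintype ι] [DecidableEq ι] [Fintype κ] [DecidableEq κ]
    (α : Matrix κ ι ℂ) (X : Matrix ι ι V), X ∈ pos ι → mconj α X ∈ pos κ
  unit_pos : ∀ (ι : Type) [Fintype ι] [DecidableEq ι],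
    Matrix.diagonal (fun _ => unit) ∈ pos ι
  archimedean : ∀ (ι : Type) [Fintype ι] [DecidableEq ι] (X : Matrix ι ι V),
    mstar X = X →
    (∀ ε : ℝ, 0 < ε → X + (ε : ℂ) • Matrix.diagonal (fun _ => unit) ∈ pos ι) →
    X ∈ pos ι
  order_unit : ∀ (ι : Type) [Fintype ι] [DecidableEq ι] (X : Matrix ι ι V),
    mstar X = X → ∃ r : ℝ, 0 < r ∧
      (r : ℂ) • Matrix.diagonal (fun _ => unit) - X ∈ pos ι
  proper : ∀ x : V, Matrix.of (fun _ _ : Fin 1 => x) ∈ pos (Fin 1) →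
    Matrix.of (fun _ _ : Fin 1 => -x) ∈ pos (Fin 1) → x = 0

variable {V W : Type}

/-- The matrix norms of an operator system, described as a predicate `‖X‖ ≤ r`,
determined by the order structure via `2×2` block matrices. -/
def OpSys.normLE [AddCommGroup V] [Module ℂ V] [StarAddMonoid V] [StarModule ℂ V]
    (𝒮 : OpSys V) {ι κ : Type} [Fintype ι] [DecidableEq ι] [Fintype κ] [DecidableEq κ]
    (X : Matrix ι κ V) (r : ℝ) : Prop :=
  Matrix.fromBlocks ((r : ℂ) • Matrix.diagonal (fun _ => 𝒮.unit)) X (mstar X)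
    ((r : ℂ) • Matrix.diagonal (fun _ => 𝒮.unit)) ∈ 𝒮.pos (ι ⊕ κ)

/-- The norm of a single element of an operator system. -/
def OpSys.elemNormLE [AddCommGroup V] [Module ℂ V] [StarAddMonoid V] [StarModule ℂ V]
    (𝒮 : OpSys V) (x : V) (r : ℝ) : Prop :=
  𝒮.normLE (Matrix.of fun _ _ : Fin 1 => x) r

/-- Completeness of the norm of an operator system. -/
def OpSys.CompleteNorms [AddCommGroup V] [Module ℂ V] [StarAddMonoid V] [StarModule ℂ V]
    (𝒮 : OpSys V) : Prop :=
  ∀ u : ℕ → V,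
    (∀ ε : ℝ, 0 < ε → ∃ N : ℕ, ∀ p ≥ N, ∀ q ≥ N, 𝒮.elemNormLE (u p - u q) ε) →
    ∃ x : V, ∀ ε : ℝ, 0 < ε → ∃ N : ℕ, ∀ p ≥ N, 𝒮.elemNormLE (u p - x) ε

section Maps

variable [AddCommGroup V] [Module ℂ V] [StarAddMonoid V] [StarModule ℂ V]
variable [AddCommGroup W] [Module ℂ W] [StarAddMonoid W] [StarModule ℂ W]

/-- Completely positive map between operator systems. -/
def IsCPmap (𝒮 : OpSys V) (𝒯 : OpSys W) (Φ : V →ₗ[ℂ] W) : Prop :=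
  ∀ (ι : Type) [Fintype ι] [DecidableEq ι], ∀ X ∈ 𝒮.pos ι, X.map Φ ∈ 𝒯.pos ι

/-- Unital completely positive map between operator systems. -/
def IsUCPmap (𝒮 : OpSys V) (𝒯 : OpSys W) (Φ : V →ₗ[ℂ] W) : Prop :=
  Φ 𝒮.unit = 𝒯.unit ∧ IsCPmap 𝒮 𝒯 Φ

/-- (Unital) complete order embedding between operator systems. -/
def IsCOEmbedding (𝒮 : OpSys V) (𝒯 : OpSys W) (Φ : V →ₗ[ℂ] W) : Prop :=
  Φ 𝒮.unit = 𝒯.unit ∧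
  ∀ (ι : Type) [Fintype ι] [DecidableEq ι], ∀ X : Matrix ι ι V,
    X ∈ 𝒮.pos ι ↔ X.map Φ ∈ 𝒯.pos ι

/-- Complete order quotient map between operator systems: a unital completely positive
surjection such that every positive `Q` admits, for every `ε > 0`, a lift `P` with
`P + ε Iₙ ⊗ 1` positive. -/
def IsCOQuotientMap (𝒮 : OpSys V) (𝒯 : OpSys W) (Φ : V →ₗ[ℂ] W) : Prop :=
  IsUCPmap 𝒮 𝒯 Φ ∧ Function.Surjective Φ ∧
  ∀ (ι : Type) [Fintype ι] [DecidableEq ι], ∀ Q ∈ 𝒯.pos ι, ∀ ε : ℝ, 0 < ε →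
    ∃ P : Matrix ι ι V,
      P + (ε : ℂ) • Matrix.diagonal (fun _ => 𝒮.unit) ∈ 𝒮.pos ι ∧ P.map Φ = Q

end Maps

section Tensor

variable [AddCommGroup V] [Module ℂ V] [AddCommGroup W] [Module ℂ W]

/-- Elementary tensor of operator-valued matrices. -/
def tkron {ι κ : Type} (P : Matrix ι ι V) (Q : Matrix κ κ W) :
    Matrix (ι × κ) (ι × κ) (V ⊗[ℂ] W) :=
  Matrix.of fun p q => P p.1 q.1 ⊗ₜ[ℂ] Q p.2 q.2

/-- The cone `D_n^{max}` : all `α (P ⊗ Q) α*`. -/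
def Dmax (posV : ∀ (ι : Type) [Fintype ι] [DecidableEq ι], Set (Matrix ι ι V))
    (posW : ∀ (ι : Type) [Fintype ι] [DecidableEq ι], Set (Matrix ι ι W))
    (ι : Type) [Fintype ι] [DecidableEq ι] : Set (Matrix ι ι (V ⊗[ℂ] W)) :=
  { Z | ∃ (k l : ℕ) (P : Matrix (Fin k) (Fin k) V) (Q : Matrix (Fin l) (Fin l) W)
      (α : Matrix ι (Fin k × Fin l) ℂ),
      P ∈ posV (Fin k) ∧ Q ∈ posW (Fin l) ∧ Z = mconj α (tkron P Q) }

/-- The positive cones of the maximal operator system tensor product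
(the Archimedeanization of `D^{max}`). -/
def maxPos (posV : ∀ (ι : Type) [Fintype ι] [DecidableEq ι], Set (Matrix ι ι V)) (uV : V)
    (posW : ∀ (ι : Type) [Fintype ι] [DecidableEq ι], Set (Matrix ι ι W)) (uW : W)
    (ι : Type) [Fintype ι] [DecidableEq ι] : Set (Matrix ι ι (V ⊗[ℂ] W)) :=
  { Z | ∀ ε : ℝ, 0 < ε →
      Z + (ε : ℂ) • Matrix.diagonal (fun _ => uV ⊗ₜ[ℂ] uW) ∈ Dmax posV posW ι }

/-- The ground level positive cone of the maximal tensor product. -/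
def maxPos1 (posV : ∀ (ι : Type) [Fintype ι] [DecidableEq ι], Set (Matrix ι ι V)) (uV : V)
    (posW : ∀ (ι : Type) [Fintype ι] [DecidableEq ι], Set (Matrix ι ι W)) (uW : W) :
    Set (V ⊗[ℂ] W) :=
  { z | Matrix.of (fun _ _ : Fin 1 => z) ∈ maxPos posV uV posW uW (Fin 1) }

end Tensor

/-- Positivity in matrix algebras over a (C*-)algebra: elements of the form `Y* Y`. -/
def cstarPos {A : Type} [Ring A] [StarRing A] (ι : Type) [Fintype ι] :
    Set (Matrix ι ι A) :=
  { X | ∃ Y : Matrix ι ι A, X = Yᴴ * Y }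

/-- The dual space of an operator system. -/
abbrev DualV (V : Type) [AddCommGroup V] [Module ℂ V] := V →ₗ[ℂ] ℂ

/-- The double dual space. -/
abbrev BiDual (V : Type) [AddCommGroup V] [Module ℂ V] := DualV (DualV V)

section Dual

variable [AddCommGroup V] [Module ℂ V]

/-- Pairing of a matrix of functionals with an operator-valued matrix. -/
def ampMat {ι κ m : Type} (f : Matrix ι κ (DualV V)) (X : Matrix m m V) :
    Matrix (m × ι) (m × κ) ℂ :=
  Matrix.of fun p q => f p.2 q.2 (X p.1 q.1)

/-- The matrix ordering on the dual space: `Mₙ(S*)⁺ = CP(S, Mₙ)`. -/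
def dualPos (posV : ∀ (ι : Type) [Fintype ι] [DecidableEq ι], Set (Matrix ι ι V))
    (ι : Type) [Fintype ι] [DecidableEq ι] : Set (Matrix ι ι (DualV V)) :=
  { f | ∀ (m : Type) [Fintype m] [DecidableEq m], ∀ X ∈ posV m, (ampMat f X).PosSemidef }

/-- The matrix ordering on the double dual. -/
def bidualPos (posV : ∀ (ι : Type) [Fintype ι] [DecidableEq ι], Set (Matrix ι ι V))
    (ι : Type) [Fintype ι] [DecidableEq ι] : Set (Matrix ι ι (BiDual V)) :=
  { F | ∀ (κ : Type) [Fintype κ] [DecidableEq κ], ∀ f ∈ dualPos posV κ,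
      (Matrix.of fun (p q : ι × κ) => F p.1 q.1 (f p.2 q.2)).PosSemidef }

end Dual

/-- `‖M‖ ≤ r` for scalar matrices, via positivity of a `2×2` block matrix. -/
def cNormLE {ι κ : Type} [Fintype ι] [DecidableEq ι] [Fintype κ] [DecidableEq κ]
    (M : Matrix ι κ ℂ) (r : ℝ) : Prop :=
  (Matrix.fromBlocks ((r : ℂ) • 1) M Mᴴ ((r : ℂ) • 1)).PosSemidef

section DualNorm

/-- The matrix norm data of an operator system, in partially applicable form. -/
def OpSys.normData [AddCommGroup V] [Module ℂ V] [StarAddMonoid V] [StarModule ℂ V]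
    (𝒮 : OpSys V) (ι κ : Type) [Fintype ι] [DecidableEq ι] [Fintype κ] [DecidableEq κ] :
    Matrix ι κ V → ℝ → Prop :=
  fun X r => 𝒮.normLE X r

/-- The matrix cones of matrices over a C*-algebra, in partially applicable form. -/
def cstarPosData (A : Type) [Ring A] [StarRing A]
    (ι : Type) [Fintype ι] [DecidableEq ι] : Set (Matrix ι ι A) :=
  cstarPos ι

/-- The completely bounded norm (as a predicate `‖f‖_cb ≤ r`) on matrices over the
dual of a space with matrix norm data `normV`; this is the operator space dual
matrix norm. -/
def dualNormLE [AddCommGroup V] [Module ℂ V]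
    (normV : ∀ (ι κ : Type) [Fintype ι] [DecidableEq ι] [Fintype κ] [DecidableEq κ],
      Matrix ι κ V → ℝ → Prop)
    (ι κ : Type) [Fintype ι] [DecidableEq ι] [Fintype κ] [DecidableEq κ]
    (f : Matrix ι κ (DualV V)) (r : ℝ) : Prop :=
  ∀ (m : Type) [Fintype m] [DecidableEq m], ∀ X : Matrix m m V,
    normV m m X 1 → cNormLE (ampMat f X) r

end DualNorm

section Werner

variable {U : Type} [AddCommGroup U] [Module ℂ U]

/-- Werner's unitization cone on `U ⊕ ℂ` for a matrix ordered operator space `U`,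
given by the matrix cones `posU` and matrix norms `normU` of `U` :
`X + A ∈ Mₙ(Ũ)⁺` iff `A ∈ Mₙ⁺` and
`φ((A+εIₙ)^{-1/2} X (A+εIₙ)^{-1/2}) ≥ -1` for every `ε > 0` and every positive
contractive functional `φ` on `Mₙ(U)`. -/
def wernerPos (posU : ∀ (ι : Type) [Fintype ι] [DecidableEq ι], Set (Matrix ι ι U))
    (normU : ∀ (ι κ : Type) [Fintype ι] [DecidableEq ι] [Fintype κ] [DecidableEq κ],
      Matrix ι κ U → ℝ → Prop)
    (ι : Type) [Fintype ι] [DecidableEq ι] : Set (Matrix ι ι (U × ℂ)) :=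
  { X | (Matrix.of fun i j => (X i j).2).PosSemidef ∧
      ∀ ε : ℝ, 0 < ε → ∀ B : Matrix ι ι ℂ, B.PosDef →
        B * B = Matrix.of (fun i j => (X i j).2) + (ε : ℂ) • 1 →
        ∀ φ : Matrix ι ι U →ₗ[ℂ] ℂ,
          (∀ g ∈ posU ι, 0 ≤ (φ g).re ∧ (φ g).im = 0) →
          (∀ (g : Matrix ι ι U) (r : ℝ), 0 ≤ r → normU ι ι g r → ‖φ g‖ ≤ r) →
          -1 ≤ (φ (mconj B⁻¹ (Matrix.of fun i j => (X i j).1))).re }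

end Werner

section MatrixMaps

variable [AddCommGroup V] [Module ℂ V] [AddCommGroup W] [Module ℂ W]

/-- Amplification of a matrix-algebra valued map evaluated on an operator matrix. -/
def blkMat {p : Type} (φ : V →ₗ[ℂ] Matrix p p ℂ) {ι : Type} (X : Matrix ι ι V) :
    Matrix (ι × p) (ι × p) ℂ :=
  Matrix.of fun q r => φ (X q.1 r.1) q.2 r.2

/-- Unital completely positive map into a matrix algebra, for raw matrix-cone data. -/
def UCPtoM {R : Type} [AddCommGroup R] [Module ℂ R]
    (posR : ∀ (ι : Type) [Fintype ι] [DecidableEq ι], Set (Matrix ι ι R)) (uR : R)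
    {p : Type} [Fintype p] [DecidableEq p] (φ : R →ₗ[ℂ] Matrix p p ℂ) : Prop :=
  φ uR = 1 ∧ ∀ (ι : Type) [Fintype ι] [DecidableEq ι], ∀ X ∈ posR ι, (blkMat φ X).PosSemidef

/-- Completely positive map from a matrix algebra into matrix-cone data. -/
def CPfromM {p : Type} [Fintype p] [DecidableEq p]
    (posW : ∀ (ι : Type) [Fintype ι] [DecidableEq ι], Set (Matrix ι ι W))
    (ψ : Matrix p p ℂ →ₗ[ℂ] W) : Prop :=
  ∀ (ι : Type) [Fintype ι] [DecidableEq ι] (B : Matrix ι ι (Matrix p p ℂ)),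
    (Matrix.of fun (q r : ι × p) => B q.1 r.1 q.2 r.2).PosSemidef →
    (Matrix.of fun i j => ψ (B i j)) ∈ posW ι

/-- The pairing `φ ⊗ ψ : V ⊗ W → M_{p×q}` associated with matrix-algebra valued maps. -/
def kronPair {p q : Type} [Fintype p] [DecidableEq p] [Fintype q] [DecidableEq q]
    (φ : V →ₗ[ℂ] Matrix p p ℂ) (ψ : W →ₗ[ℂ] Matrix q q ℂ) :
    V ⊗[ℂ] W →ₗ[ℂ] Matrix (p × q) (p × q) ℂ :=
  TensorProduct.lift
    (LinearMap.mk₂ ℂ (fun v w => φ v ⊗ₖ ψ w)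
      (fun v v' w => by simp [map_add, Matrix.add_kronecker])
      (fun c v w => by simp [map_smul, Matrix.smul_kronecker])
      (fun v w w' => by simp [map_add, Matrix.kronecker_add])
      (fun c v w => by simp [map_smul, Matrix.kronecker_smul]))

/-- The ground level positive cone of the minimal operator system tensor product. -/
def minPos1 (posV : ∀ (ι : Type) [Fintype ι] [DecidableEq ι], Set (Matrix ι ι V)) (uV : V)
    (posW : ∀ (ι : Type) [Fintype ι] [DecidableEq ι], Set (Matrix ι ι W)) (uW : W) :
    Set (V ⊗[ℂ] W) :=
  { z | ∀ (k m : ℕ) (φ : V →ₗ[ℂ] Matrix (Fin k) (Fin k) ℂ)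
      (ψ : W →ₗ[ℂ] Matrix (Fin m) (Fin m) ℂ),
      UCPtoM posV uV φ → UCPtoM posW uW ψ → (kronPair φ ψ z).PosSemidef }

/-- The matrix level positive cones of the minimal operator system tensor product. -/
def minPosMat (posV : ∀ (ι : Type) [Fintype ι] [DecidableEq ι], Set (Matrix ι ι V)) (uV : V)
    (posW : ∀ (ι : Type) [Fintype ι] [DecidableEq ι], Set (Matrix ι ι W)) (uW : W)
    (ι : Type) [Fintype ι] [DecidableEq ι] : Set (Matrix ι ι (V ⊗[ℂ] W)) :=
  { Z | ∀ (k m : ℕ) (φ : V →ₗ[ℂ] Matrix (Fin k) (Fin k) ℂ)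
      (ψ : W →ₗ[ℂ] Matrix (Fin m) (Fin m) ℂ),
      UCPtoM posV uV φ → UCPtoM posW uW ψ →
      (Matrix.of fun (q r : ι × (Fin k × Fin m)) =>
        kronPair φ ψ (Z q.1 r.1) q.2 r.2).PosSemidef }

/-- The entry functionals of a matrix-algebra valued map. -/
def entryF {p : Type} (f : V →ₗ[ℂ] Matrix p p ℂ) (i j : p) : DualV V where
  toFun x := f x i j
  map_add' x y := by simp [map_add, Matrix.add_apply]
  map_smul' c x := by simp [map_smul, Matrix.smul_apply]

/-- Conjugation of a matrix-algebra valued map by a fixed scalar matrix. -/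
def conjMap {p : Type} [Fintype p] (B : Matrix p p ℂ) (f : V →ₗ[ℂ] Matrix p p ℂ) :
    V →ₗ[ℂ] Matrix p p ℂ where
  toFun x := B * f x * B
  map_add' x y := by simp [map_add, Matrix.mul_add, Matrix.add_mul]
  map_smul' c x := by simp [map_smul, Matrix.mul_smul, Matrix.smul_mul]

end MatrixMaps

/-- The weak expectation property, for raw matrix-cone data `(posV, uV)` on `V` :
the canonical inclusion into the bidual factors through some `B(H)`
(`H = ℓ²(Λ)`) by unital completely positive maps. -/
def HasWEP {V : Type} [AddCommGroup V] [Module ℂ V]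
    (posV : ∀ (ι : Type) [Fintype ι] [DecidableEq ι], Set (Matrix ι ι V)) (uV : V) : Prop :=
  ∃ (Λ : Type) (Φ : V →ₗ[ℂ] ((lp (fun _ : Λ => ℂ) 2) →L[ℂ] (lp (fun _ : Λ => ℂ) 2)))
    (Ψ : ((lp (fun _ : Λ => ℂ) 2) →L[ℂ] (lp (fun _ : Λ => ℂ) 2)) →ₗ[ℂ] BiDual V),
    Φ uV = 1 ∧
    (∀ (ι : Type) [Fintype ι] [DecidableEq ι], ∀ X ∈ posV ι, X.map Φ ∈ cstarPos ι) ∧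
    Ψ 1 = Module.Dual.eval ℂ V uV ∧
    (∀ (ι : Type) [Fintype ι] [DecidableEq ι],
      ∀ Y ∈ cstarPos (A := (lp (fun _ : Λ => ℂ) 2) →L[ℂ] (lp (fun _ : Λ => ℂ) 2)) ι,
        Y.map Ψ ∈ bidualPos posV ι) ∧
    (∀ x : V, Ψ (Φ x) = Module.Dual.eval ℂ V x)

end
section Helpers
set_option linter.unusedSectionVars false

variable {V W : Type}
variable [AddCommGroup V] [Module ℂ V] [StarAddMonoid V] [StarModule ℂ V]

lemma mstar_apply' {ι κ : Type} (X : Matrix ι κ V) (i : κ) (j : ι) :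
    mstar X i j = star (X j i) := rfl

lemma mstar_add' {ι κ : Type} (X Y : Matrix ι κ V) :
    mstar (X + Y) = mstar X + mstar Y := by
  ext i j; simp [mstar_apply', Matrix.add_apply, star_add]

lemma mstar_mstar' {ι κ : Type} (X : Matrix ι κ V) : mstar (mstar X) = X := by
  ext i j; simp [mstar_apply']

lemma OpSys.smul_mem_pos (𝒮 : OpSys V) {ι : Type} [Fintype ι] [DecidableEq ι]
    {X : Matrix ι ι V} (hX : X ∈ 𝒮.pos ι) {s : ℝ} (hs : 0 ≤ s) :
    ((s : ℂ)) • X ∈ 𝒮.pos ι := by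
  have h := 𝒮.pos_conj ι ι (Matrix.diagonal fun _ => ((Real.sqrt s : ℝ) : ℂ)) X hX
  have he : mconj (Matrix.diagonal fun _ => ((Real.sqrt s : ℝ) : ℂ)) X = ((s : ℂ)) • X := by
    ext i j
    simp only [mconj, Matrix.of_apply, Matrix.diagonal_apply, Matrix.smul_apply]
    rw [Finset.sum_eq_single i ?h1 ?h2]
    · rw [Finset.sum_eq_single j ?h3 ?h4]
      · simp [Complex.star_def, Complex.conj_ofReal, ← Complex.ofReal_mul,
          Real.mul_self_sqrt hs]
      · intro b _ hb; simp [if_neg (Ne.symm hb)]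
      · intro hj; exact absurd (Finset.mem_univ j) hj
    · intro b _ hb
      simp [if_neg (Ne.symm hb)]
    · intro hi; exact absurd (Finset.mem_univ i) hi
  rwa [he] at h

lemma OpSys.smul_unit_mem_pos (𝒮 : OpSys V) {ι : Type} [Fintype ι] [DecidableEq ι]
    {s : ℝ} (hs : 0 ≤ s) :
    ((s : ℂ)) • Matrix.diagonal (fun _ => 𝒮.unit) ∈ 𝒮.pos ι :=
  𝒮.smul_mem_pos (𝒮.unit_pos ι) hs

end Helpers
section Helpers2
set_option linter.unusedSectionVars false
variable {V : Type} [AddCommGroup V] [Module ℂ V] [StarAddMonoid V] [StarModule ℂ V]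

lemma mconj_rowAll {ι : Type} [Fintype ι] [DecidableEq ι]
    (A X Y B : Matrix ι ι V) :
    mconj (Matrix.of fun i => Sum.elim (fun j => if j = i then (1:ℂ) else 0)
        (fun j => if j = i then (1:ℂ) else 0))
      (Matrix.fromBlocks A X Y B) = A + X + Y + B := by
  ext i j
  simp only [mconj, Matrix.of_apply, Fintype.sum_sum_type, Sum.elim_inl, Sum.elim_inr,
    Matrix.fromBlocks_apply₁₁, Matrix.fromBlocks_apply₁₂, Matrix.fromBlocks_apply₂₁,
    Matrix.fromBlocks_apply₂₂, Matrix.add_apply]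
  simp [apply_ite star, apply_ite (starRingEnd ℂ), ite_mul, mul_ite, ite_smul, smul_ite,
    Finset.sum_add_distrib, Finset.sum_ite_eq, Finset.sum_ite_eq']
  abel

lemma mconj_colSign {ι : Type} [Fintype ι] [DecidableEq ι] (ε : ℝ) (M : Matrix ι ι V) :
    mconj (Matrix.of (Sum.elim (fun (a : ι) (i : ι) => if i = a then (1:ℂ) else 0)
        (fun a i => if i = a then (ε:ℂ) else 0)))
      M = Matrix.fromBlocks M ((ε:ℂ) • M) ((ε:ℂ) • M) (((ε*ε : ℝ):ℂ) • M) := by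
  ext p q
  cases p <;> cases q <;>
    simp [mconj, ite_mul, mul_ite, ite_smul, smul_ite, apply_ite star,
      apply_ite (starRingEnd ℂ), Complex.star_def, Complex.conj_ofReal,
      Finset.sum_ite_eq, Finset.sum_ite_eq', mul_smul, Matrix.smul_apply]

end Helpers2
section Helpers3
set_option linter.unusedSectionVars false
variable {V : Type} [AddCommGroup V] [Module ℂ V] [StarAddMonoid V] [StarModule ℂ V]

/-- If `r•1 + Z` and `r•1 - Z` are positive and `Z` is selfadjoint, then `‖Z‖ ≤ r`. -/
lemma normLE_of_pm (𝒮 : OpSys V) {ι : Type} [Fintype ι] [DecidableEq ι]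
    {Z : Matrix ι ι V} {r : ℝ} (hZ : mstar Z = Z)
    (h1 : (r:ℂ) • Matrix.diagonal (fun _ => 𝒮.unit) + Z ∈ 𝒮.pos ι)
    (h2 : (r:ℂ) • Matrix.diagonal (fun _ => 𝒮.unit) - Z ∈ 𝒮.pos ι) :
    𝒮.normLE Z r := by
  set D : Matrix ι ι V := Matrix.diagonal (fun _ => 𝒮.unit) with hD
  have p1 := 𝒮.pos_conj ι (ι ⊕ ι)
    (Matrix.of (Sum.elim (fun (a : ι) (i : ι) => if i = a then (1:ℂ) else 0)
        (fun a i => if i = a then ((1:ℝ):ℂ) else 0))) _ h1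
  have p2 := 𝒮.pos_conj ι (ι ⊕ ι)
    (Matrix.of (Sum.elim (fun (a : ι) (i : ι) => if i = a then (1:ℂ) else 0)
        (fun a i => if i = a then ((-1:ℝ):ℂ) else 0))) _ h2
  rw [mconj_colSign] at p1 p2
  have psum := 𝒮.pos_add _ _ _ p1 p2
  have phalf := 𝒮.smul_mem_pos psum (by norm_num : (0:ℝ) ≤ 1/2)
  have heq : ((1/2 : ℝ):ℂ) •
      (Matrix.fromBlocks ((r:ℂ) • D + Z) (((1:ℝ):ℂ) • ((r:ℂ) • D + Z))
          (((1:ℝ):ℂ) • ((r:ℂ) • D + Z)) (((1*1 : ℝ):ℂ) • ((r:ℂ) • D + Z)) +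
        Matrix.fromBlocks ((r:ℂ) • D - Z) (((-1:ℝ):ℂ) • ((r:ℂ) • D - Z))
          (((-1:ℝ):ℂ) • ((r:ℂ) • D - Z)) (((-1*-1 : ℝ):ℂ) • ((r:ℂ) • D - Z))) =
      Matrix.fromBlocks ((r:ℂ) • D) Z (mstar Z) ((r:ℂ) • D) := by
    rw [hZ]
    ext p q
    cases p <;> cases q <;>
      · simp only [Matrix.add_apply, Matrix.smul_apply, Matrix.fromBlocks_apply₁₁,
          Matrix.fromBlocks_apply₁₂, Matrix.fromBlocks_apply₂₁, Matrix.fromBlocks_apply₂₂,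
          Matrix.sub_apply]
        push_cast
        module
  rw [heq] at phalf
  unfold OpSys.normLE
  have : Matrix.fromBlocks ((r:ℂ) • Matrix.diagonal (fun _ => 𝒮.unit)) Z (mstar Z)
      ((r:ℂ) • Matrix.diagonal (fun _ => 𝒮.unit)) =
      Matrix.fromBlocks ((r:ℂ) • D) Z (mstar Z) ((r:ℂ) • D) := rfl
  rw [this]
  exact phalf

/-- If `‖Z‖ ≤ r` then `2r•1 + Z + Z*` is positive. -/
lemma pos_of_normLE (𝒮 : OpSys V) {ι : Type} [Fintype ι] [DecidableEq ι]
    {Z : Matrix ι ι V} {r : ℝ} (h : 𝒮.normLE Z r) :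
    ((2*r : ℝ):ℂ) • Matrix.diagonal (fun _ => 𝒮.unit) + (Z + mstar Z) ∈ 𝒮.pos ι := by
  have p := 𝒮.pos_conj (ι ⊕ ι) ι
    (Matrix.of fun i => Sum.elim (fun j => if j = i then (1:ℂ) else 0)
        (fun j => if j = i then (1:ℂ) else 0)) _ h
  rw [mconj_rowAll] at p
  have hq : (r:ℂ) • Matrix.diagonal (fun _ : ι => 𝒮.unit) + Z + mstar Z +
      (r:ℂ) • Matrix.diagonal (fun _ => 𝒮.unit) =
      ((2*r : ℝ):ℂ) • Matrix.diagonal (fun _ => 𝒮.unit) + (Z + mstar Z) := by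
    ext i j
    simp only [Matrix.add_apply, Matrix.smul_apply]
    push_cast
    module
  rwa [hq] at p

end Helpers3
section Helpers4
set_option linter.unusedSectionVars false
variable {V W : Type}
variable [AddCommGroup V] [Module ℂ V] [StarAddMonoid V] [StarModule ℂ V]
variable [AddCommGroup W] [Module ℂ W] [StarAddMonoid W] [StarModule ℂ W]

lemma ucp_map_star (𝒮 : OpSys V) (𝒯 : OpSys W) (Φ : V →ₗ[ℂ] W)
    (hucp : IsUCPmap 𝒮 𝒯 Φ) (x : V) : Φ (star x) = star (Φ x) := by
  have key : ∀ y : V, star y = y → star (Φ y) = Φ y := by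
    intro y hy
    have hm : mstar (Matrix.of fun _ _ : Fin 1 => y) = Matrix.of fun _ _ : Fin 1 => y := by
      ext i j; simp [mstar_apply', hy]
    obtain ⟨r, _, hpos⟩ := 𝒮.order_unit (Fin 1) _ hm
    have hsa := 𝒯.pos_star (Fin 1) _ (hucp.2 (Fin 1) _ hpos)
    have h00 := congrFun (congrFun hsa 0) 0
    simp only [mstar_apply', Matrix.map_apply, Matrix.sub_apply, Matrix.smul_apply,
      Matrix.diagonal_apply_eq, Matrix.of_apply, map_sub, map_smul, hucp.1,
      star_sub, star_smul, 𝒯.unit_star, Complex.star_def, Complex.conj_ofReal] at h00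
    have := sub_right_injective h00
    exact this
  have hIk : Complex.I • ((Complex.I/2) • (star x - x)) = (-(1/2) : ℂ) • (star x - x) := by
    rw [smul_smul, div_eq_mul_inv, ← mul_assoc, Complex.I_mul_I]
    norm_num
  have hh : star ((1/2 : ℂ) • (x + star x)) = (1/2 : ℂ) • (x + star x) := by
    rw [star_smul, star_add, star_star]
    norm_num [Complex.star_def]
    module
  have hk : star ((Complex.I/2) • (star x - x)) = (Complex.I/2) • (star x - x) := by
    rw [star_smul, star_sub, star_star]
    rw [show star (Complex.I/2) = -(Complex.I/2) by
      simp [Complex.star_def, Complex.conj_I, neg_div]]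
    module
  have hx1 : x = (1/2:ℂ) • (x + star x) + Complex.I • ((Complex.I/2) • (star x - x)) := by
    rw [hIk]; module
  have hx2 : star x =
      (1/2:ℂ) • (x + star x) - Complex.I • ((Complex.I/2) • (star x - x)) := by
    rw [hIk]; module
  have e1 := key _ hh
  have e2 := key _ hk
  set h : V := (1/2:ℂ) • (x + star x) with hhdef
  set k : V := (Complex.I/2) • (star x - x) with hkdef
  have hφ1 : Φ x = Φ h + Complex.I • Φ k := by
    conv_lhs => rw [hx1]
    rw [map_add, map_smul Φ Complex.I k]
  calc Φ (star x) = Φ h - Complex.I • Φ k := by rw [hx2, map_sub, map_smul Φ Complex.I k]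
    _ = star (Φ x) := by
        rw [hφ1, star_add, star_smul, e1, e2, Complex.star_def, Complex.conj_I]
        module

lemma map_mstar' (𝒮 : OpSys V) (𝒯 : OpSys W) (Φ : V →ₗ[ℂ] W)
    (hucp : IsUCPmap 𝒮 𝒯 Φ) {ι κ : Type} (X : Matrix ι κ V) :
    (mstar X).map Φ = mstar (X.map Φ) := by
  ext i j
  simp [mstar_apply', Matrix.map_apply, ucp_map_star 𝒮 𝒯 Φ hucp]

end Helpers4
/-- **Proposition 3.3.** Let `Φ : S → T` be a unital completely positive surjection
between operator systems.  If `Φ` is a complete quotient map of operator spaces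
(each amplification maps the open unit ball of `Mₙ(S)` onto the open unit ball of
`Mₙ(T)`), then `Φ` is a complete order quotient map. -/
theorem complete_quotient_map_is_complete_order_quotient_map {V W : Type}
    [AddCommGroup V] [Module ℂ V] [StarAddMonoid V] [StarModule ℂ V]
    [AddCommGroup W] [Module ℂ W] [StarAddMonoid W] [StarModule ℂ W]
    (𝒮 : OpSys V) (𝒯 : OpSys W) (Φ : V →ₗ[ℂ] W)
    (hucp : IsUCPmap 𝒮 𝒯 Φ) (hsurj : Function.Surjective Φ)
    (hq : ∀ (ι : Type) [Fintype ι] [DecidableEq ι] (Z : Matrix ι ι W),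
      (∃ r : ℝ, 0 ≤ r ∧ r < 1 ∧ 𝒯.normLE Z r) ↔
        ∃ X : Matrix ι ι V, X.map Φ = Z ∧ ∃ r : ℝ, 0 ≤ r ∧ r < 1 ∧ 𝒮.normLE X r) :
    IsCOQuotientMap 𝒮 𝒯 Φ := by
  refine ⟨hucp, hsurj, ?_⟩
  intro ι _ _ Q hQ ε hε
  have hQsa : mstar Q = Q := 𝒯.pos_star ι Q hQ
  obtain ⟨s, hs, hsQ⟩ := 𝒯.order_unit ι Q hQsa
  set DT : Matrix ι ι W := Matrix.diagonal (fun _ => 𝒯.unit) with hDT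
  set DS : Matrix ι ι V := Matrix.diagonal (fun _ => 𝒮.unit) with hDS
  set t : ℝ := s + 2*ε with ht
  have ht0 : 0 < t := by rw [ht]; linarith
  have htne : (t:ℂ) ≠ 0 := by exact_mod_cast ht0.ne'
  set Z : Matrix ι ι W := ((1/t : ℝ):ℂ) • (((2:ℝ):ℂ) • Q + ((2*ε - t : ℝ):ℂ) • DT)
    with hZdef
  have hDTsa : mstar DT = DT := by
    ext i j
    simp only [mstar_apply', hDT, Matrix.diagonal_apply]
    by_cases h : j = i
    · subst h; simp [𝒯.unit_star]
    · simp [h, show ¬ i = j from fun h' => h h'.symm]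
  have hQ' : ∀ i j, star (Q j i) = Q i j := by
    intro i j; have := congrFun (congrFun hQsa i) j; simpa [mstar_apply'] using this
  have hDT' : ∀ i j, star (DT j i) = DT i j := by
    intro i j; have := congrFun (congrFun hDTsa i) j; simpa [mstar_apply'] using this
  have hZsa : mstar Z = Z := by
    ext i j
    simp only [mstar_apply', hZdef, Matrix.smul_apply, Matrix.add_apply, star_add,
      star_smul, Complex.star_def, Complex.conj_ofReal, hQ', hDT']
  have hZ' : ∀ i j, star (Z j i) = Z i j := by
    intro i j; have := congrFun (congrFun hZsa i) j; simpa [mstar_apply'] using this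
  set r₀ : ℝ := (t - ε)/t with hr₀def
  have hr₀0 : 0 ≤ r₀ := by
    apply div_nonneg _ ht0.le; rw [ht]; linarith
  have hr₀1 : r₀ < 1 := by rw [hr₀def, div_lt_one ht0]; linarith
  have hplus : (r₀:ℂ) • DT + Z ∈ 𝒯.pos ι := by
    have hp : ((1/t : ℝ):ℂ) • (((2:ℝ):ℂ) • Q + ((ε:ℝ):ℂ) • DT) ∈ 𝒯.pos ι :=
      𝒯.smul_mem_pos (𝒯.pos_add ι _ _ (𝒯.smul_mem_pos hQ (by norm_num))
        (𝒯.smul_unit_mem_pos hε.le)) (by positivity)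
    have he : (r₀:ℂ) • DT + Z = ((1/t : ℝ):ℂ) • (((2:ℝ):ℂ) • Q + ((ε:ℝ):ℂ) • DT) := by
      ext i j
      simp only [hZdef, hr₀def, Matrix.add_apply, Matrix.smul_apply]
      match_scalars <;> push_cast <;> field_simp <;> ring
    rwa [he]
  have hminus : (r₀:ℂ) • DT - Z ∈ 𝒯.pos ι := by
    have hp : ((1/t : ℝ):ℂ) • (((2:ℝ):ℂ) • ((s:ℂ) • DT - Q) + ((ε:ℝ):ℂ) • DT) ∈ 𝒯.pos ι :=
      𝒯.smul_mem_pos (𝒯.pos_add ι _ _ (𝒯.smul_mem_pos hsQ (by norm_num))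
        (𝒯.smul_unit_mem_pos hε.le)) (by positivity)
    have he : (r₀:ℂ) • DT - Z =
        ((1/t : ℝ):ℂ) • (((2:ℝ):ℂ) • ((s:ℂ) • DT - Q) + ((ε:ℝ):ℂ) • DT) := by
      ext i j
      simp only [hZdef, hr₀def, ht, Matrix.add_apply, Matrix.smul_apply, Matrix.sub_apply]
      match_scalars <;> push_cast <;> field_simp <;> ring
    rwa [he]
  have hZnorm : 𝒯.normLE Z r₀ := normLE_of_pm 𝒯 hZsa hplus hminus
  obtain ⟨X, hXZ, r', hr'0, hr'1, hXnorm⟩ := (hq ι Z).mp ⟨r₀, hr₀0, hr₀1, hZnorm⟩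
  have hM := pos_of_normLE 𝒮 hXnorm
  refine ⟨((t/4 : ℝ):ℂ) • (X + mstar X) + ((t/2 - ε : ℝ):ℂ) • DS, ?_, ?_⟩
  · have hsum := 𝒮.pos_add ι _ _ hM
      (𝒮.smul_unit_mem_pos (by linarith : (0:ℝ) ≤ 2 - 2*r'))
    have hp := 𝒮.smul_mem_pos hsum (by linarith : (0:ℝ) ≤ t/4)
    have he : ((t/4 : ℝ):ℂ) •
        (((2*r' : ℝ):ℂ) • DS + (X + mstar X) + ((2 - 2*r' : ℝ):ℂ) • DS) =
        ((t/4 : ℝ):ℂ) • (X + mstar X) + ((t/2 - ε : ℝ):ℂ) • DS + (ε:ℂ) • DS := by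
      ext i j
      simp only [Matrix.add_apply, Matrix.smul_apply]
      match_scalars <;> push_cast <;> ring
    rwa [he] at hp
  · ext i j
    have hφX : ∀ a b, Φ (X a b) = Z a b := by
      intro a b; have := congrFun (congrFun hXZ a) b
      simpa [Matrix.map_apply] using this
    have hφXs : Φ (star (X j i)) = Z i j := by
      rw [ucp_map_star 𝒮 𝒯 Φ hucp, hφX, hZ']
    have hφD : Φ (DS i j) = DT i j := by
      simp only [hDS, hDT, Matrix.diagonal_apply]
      split
      · exact hucp.1
      · exact map_zero Φ
    simp only [Matrix.map_apply, Matrix.add_apply, Matrix.smul_apply, map_add, map_smul,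
      mstar_apply']
    rw [hφX, hφXs, hφD]
    simp only [hZdef, Matrix.smul_apply, Matrix.add_apply]
    match_scalars <;> push_cast <;> field_simp <;> ring
end

section
/- Let S₁, S₂, T be operator systems and Φ : S₁ → S₂ a complete order quotient map. Then Φ ⊗ id_T : S₁ ⊗_max T → S₂ ⊗_max T is a complete order quotient map. (Projectivity of the maximal operator system tensor product.) -/
open scoped TensorProduct Kronecker ComplexOrder Matrix

section Helpers

open Matrix TensorProduct

variable {V W : Type} [AddCommGroup V] [Module ℂ V] [AddCommGroup W] [Module ℂ W]

lemma mconj_apply {m n : Type} [Fintype m] (α : Matrix n m ℂ) (X : Matrix m m V) (i j : n) :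
    mconj α X i j = ∑ k, ∑ l, (α i k * star (α j l)) • X k l := rfl

lemma mconj_add {m n : Type} [Fintype m] (α : Matrix n m ℂ) (X Y : Matrix m m V) :
    mconj α (X + Y) = mconj α X + mconj α Y := by
  ext i j
  simp [mconj_apply, smul_add, Finset.sum_add_distrib]

lemma mconj_smul {m n : Type} [Fintype m] (α : Matrix n m ℂ) (c : ℂ) (X : Matrix m m V) :
    mconj α (c • X) = c • mconj α X := by
  ext i j
  simp [mconj_apply, Matrix.smul_apply, smul_comm c, Finset.smul_sum]

lemma map_mconj {m n : Type} [Fintype m] (α : Matrix n m ℂ) (X : Matrix m m V)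
    (f : V →ₗ[ℂ] W) : (mconj α X).map f = mconj α (X.map f) := by
  ext i j
  simp [mconj_apply, Matrix.map_apply, map_sum, _root_.map_smul]

lemma tkron_add_left {ι κ : Type} (P P' : Matrix ι ι V) (Q : Matrix κ κ W) :
    tkron (P + P') Q = tkron P Q + tkron P' Q := by
  ext p q
  simp [tkron, add_tmul]

lemma tkron_smul_left {ι κ : Type} (c : ℂ) (P : Matrix ι ι V) (Q : Matrix κ κ W) :
    tkron (c • P) Q = c • tkron P Q := by
  ext p q
  simp [tkron, smul_tmul']

lemma mconj_submatrix {m m' n : Type} [Fintype m] [Fintype m'] (e : m' ≃ m)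
    (α : Matrix n m ℂ) (X : Matrix m m V) :
    mconj (Matrix.of fun i a => α i (e a)) (X.submatrix e e) = mconj α X := by
  ext i j
  rw [mconj_apply, mconj_apply]
  rw [← Equiv.sum_comp e (fun k => ∑ l, (α i k * star (α j l)) • X k l)]
  refine Finset.sum_congr rfl fun a _ => ?_
  rw [← Equiv.sum_comp e (fun l => (α i (e a) * star (α j l)) • X (e a) l)]
  rfl

end Helpers

section Helpers2

open Matrix TensorProduct

variable {V W : Type} [AddCommGroup V] [Module ℂ V] [StarAddMonoid V] [StarModule ℂ V]
variable [AddCommGroup W] [Module ℂ W] [StarAddMonoid W] [StarModule ℂ W]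

lemma submatrix_eq_mconj {m n : Type} [Fintype m] [DecidableEq m] (e : n ≃ m)
    (X : Matrix m m V) :
    X.submatrix e e = mconj (Matrix.of fun (a : n) (j : m) => if j = e a then 1 else 0) X := by
  ext a b
  simp [mconj_apply, apply_ite (star : ℂ → ℂ), ite_mul, mul_ite, ite_smul,
    Finset.sum_ite_eq', Matrix.submatrix_apply]

lemma submatrix_mem_pos (𝒮 : OpSys V) {m n : Type} [Fintype m] [DecidableEq m]
    [Fintype n] [DecidableEq n] (e : n ≃ m) {X : Matrix m m V} (hX : X ∈ 𝒮.pos m) :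
    X.submatrix e e ∈ 𝒮.pos n := by
  rw [submatrix_eq_mconj]
  exact 𝒮.pos_conj _ _ _ _ hX

lemma zero_mem_pos (𝒮 : OpSys V) (ι : Type) [Fintype ι] [DecidableEq ι] :
    (0 : Matrix ι ι V) ∈ 𝒮.pos ι := by
  have h := 𝒮.pos_conj ι ι 0 (Matrix.diagonal fun _ => 𝒮.unit) (𝒮.unit_pos ι)
  have : mconj (0 : Matrix ι ι ℂ) (Matrix.diagonal fun _ : ι => 𝒮.unit) = 0 := by
    ext i j; simp [mconj_apply]
  rwa [this] at h

lemma sum_mem_pos (𝒮 : OpSys V) {ι : Type} [Fintype ι] [DecidableEq ι] {J : Type}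
    (s : Finset J) (f : J → Matrix ι ι V) (h : ∀ j ∈ s, f j ∈ 𝒮.pos ι) :
    ∑ j ∈ s, f j ∈ 𝒮.pos ι :=
  Finset.sum_induction f (· ∈ 𝒮.pos ι) (fun _ _ => 𝒮.pos_add ι _ _) (zero_mem_pos 𝒮 ι) h

lemma mem_Dmax_of (𝒮 : OpSys V) (𝒯 : OpSys W) {ι ι' κ' : Type}
    [Fintype ι] [DecidableEq ι] [Fintype ι'] [DecidableEq ι'] [Fintype κ'] [DecidableEq κ']
    {P : Matrix ι' ι' V} (hP : P ∈ 𝒮.pos ι') {Q : Matrix κ' κ' W} (hQ : Q ∈ 𝒯.pos κ')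
    (α : Matrix ι (ι' × κ') ℂ) : mconj α (tkron P Q) ∈ Dmax 𝒮.pos 𝒯.pos ι := by
  let e : Fin (Fintype.card ι') ≃ ι' := (Fintype.equivFin ι').symm
  let f : Fin (Fintype.card κ') ≃ κ' := (Fintype.equivFin κ').symm
  refine ⟨Fintype.card ι', Fintype.card κ', P.submatrix e e, Q.submatrix f f,
    Matrix.of fun i c => α i (e c.1, f c.2),
    submatrix_mem_pos 𝒮 e hP, submatrix_mem_pos 𝒯 f hQ, ?_⟩
  have h1 : tkron (P.submatrix e e) (Q.submatrix f f)
      = (tkron P Q).submatrix (e.prodCongr f) (e.prodCongr f) := rfl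
  rw [h1]
  exact (mconj_submatrix (e.prodCongr f) α (tkron P Q)).symm

omit [StarAddMonoid V] [StarModule ℂ V] [AddCommGroup W] [Module ℂ W] [StarAddMonoid W] [StarModule ℂ W] in
lemma mconj_smul_left {m n : Type} [Fintype m] {U : Type} [AddCommGroup U] [Module ℂ U] (c : ℂ) (α : Matrix n m ℂ)
    (X : Matrix m m U) : mconj (c • α) X = (c * star c) • mconj α X := by
  ext i j
  rw [Matrix.smul_apply, mconj_apply, mconj_apply, Finset.smul_sum]
  refine Finset.sum_congr rfl fun k _ => ?_
  rw [Finset.smul_sum]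
  refine Finset.sum_congr rfl fun l _ => ?_
  rw [smul_smul]
  congr 1
  simp only [Matrix.smul_apply, smul_eq_mul, star_mul']
  ring

lemma Dmax_smul (𝒮 : OpSys V) (𝒯 : OpSys W) {ι : Type} [Fintype ι] [DecidableEq ι]
    {δ : ℝ} (hδ : 0 ≤ δ) {Z : Matrix ι ι (V ⊗[ℂ] W)} (hZ : Z ∈ Dmax 𝒮.pos 𝒯.pos ι) :
    (δ : ℂ) • Z ∈ Dmax 𝒮.pos 𝒯.pos ι := by
  obtain ⟨k, l, P, Q, α, hP, hQ, rfl⟩ := hZ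
  refine ⟨k, l, P, Q, ((Real.sqrt δ : ℂ)) • α, hP, hQ, ?_⟩
  rw [mconj_smul_left]
  congr 1
  rw [Complex.star_def, Complex.conj_ofReal, ← Complex.ofReal_mul,
    Real.mul_self_sqrt hδ]

lemma fromBlocks_mem_pos (𝒮 : OpSys V) {m n : Type} [Fintype m] [DecidableEq m]
    [Fintype n] [DecidableEq n] {P : Matrix m m V} (hP : P ∈ 𝒮.pos m)
    {P' : Matrix n n V} (hP' : P' ∈ 𝒮.pos n) :
    Matrix.fromBlocks P 0 0 P' ∈ 𝒮.pos (m ⊕ n) := by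
  have h1 : (Matrix.fromBlocks P 0 0 0 : Matrix (m ⊕ n) (m ⊕ n) V)
      = mconj (Matrix.of fun (s : m ⊕ n) (a : m) => if s = Sum.inl a then 1 else 0) P := by
    ext s t
    cases s <;> cases t <;>
      simp [mconj_apply, apply_ite (star : ℂ → ℂ), ite_mul, mul_ite, ite_smul,
        Finset.sum_ite_eq', Sum.inl.injEq]
  have h2 : (Matrix.fromBlocks 0 0 0 P' : Matrix (m ⊕ n) (m ⊕ n) V)
      = mconj (Matrix.of fun (s : m ⊕ n) (a : n) => if s = Sum.inr a then 1 else 0) P' := by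
    ext s t
    cases s <;> cases t <;>
      simp [mconj_apply, apply_ite (star : ℂ → ℂ), ite_mul, mul_ite, ite_smul,
        Finset.sum_ite_eq', Sum.inr.injEq]
  have : (Matrix.fromBlocks P 0 0 P' : Matrix (m ⊕ n) (m ⊕ n) V)
      = Matrix.fromBlocks P 0 0 0 + Matrix.fromBlocks 0 0 0 P' := by
    ext s t; cases s <;> cases t <;> simp [Matrix.fromBlocks]
  rw [this, h1, h2]
  exact 𝒮.pos_add _ _ _ (𝒮.pos_conj _ _ _ _ hP) (𝒮.pos_conj _ _ _ _ hP')

lemma Dmax_add (𝒮 : OpSys V) (𝒯 : OpSys W) {ι : Type} [Fintype ι] [DecidableEq ι]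
    {Z₁ Z₂ : Matrix ι ι (V ⊗[ℂ] W)} (h₁ : Z₁ ∈ Dmax 𝒮.pos 𝒯.pos ι)
    (h₂ : Z₂ ∈ Dmax 𝒮.pos 𝒯.pos ι) : Z₁ + Z₂ ∈ Dmax 𝒮.pos 𝒯.pos ι := by
  obtain ⟨k, l, P, Q, α, hP, hQ, rfl⟩ := h₁
  obtain ⟨k', l', P', Q', β, hP', hQ', rfl⟩ := h₂
  have hPP := fromBlocks_mem_pos 𝒮 hP hP'
  have hQQ := fromBlocks_mem_pos 𝒯 hQ hQ'
  set γ : Matrix ι ((Fin k ⊕ Fin k') × (Fin l ⊕ Fin l')) ℂ := Matrix.of fun i c =>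
    Sum.elim (fun a => Sum.elim (fun b => α i (a, b)) (fun _ => 0) c.2)
      (fun a => Sum.elim (fun _ => 0) (fun b => β i (a, b)) c.2) c.1 with hγ
  have key : mconj α (tkron P Q) + mconj β (tkron P' Q')
      = mconj γ (tkron (Matrix.fromBlocks P 0 0 P') (Matrix.fromBlocks Q 0 0 Q')) := by
    ext i j
    simp [mconj_apply, tkron, hγ, Matrix.fromBlocks, Fintype.sum_prod_type,
      Fintype.sum_sum_type, TensorProduct.tmul_zero, TensorProduct.zero_tmul]
  rw [key]
  exact mem_Dmax_of 𝒮 𝒯 hPP hQQ γ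

lemma unit_of_mem_pos (𝒮 : OpSys V) :
    (Matrix.of fun _ _ : Fin 1 => 𝒮.unit) ∈ 𝒮.pos (Fin 1) := by
  have h := 𝒮.unit_pos (Fin 1)
  have : (Matrix.diagonal fun _ : Fin 1 => 𝒮.unit) = Matrix.of fun _ _ : Fin 1 => 𝒮.unit := by
    ext i j
    rw [Subsingleton.elim i j]
    simp
  rwa [this] at h

lemma unit_tmul_mem_Dmax (𝒮 : OpSys V) (𝒯 : OpSys W) {ι : Type} [Fintype ι] [DecidableEq ι]
    {Q : Matrix ι ι W} (hQ : Q ∈ 𝒯.pos ι) :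
    (Matrix.of fun i j => 𝒮.unit ⊗ₜ[ℂ] Q i j) ∈ Dmax 𝒮.pos 𝒯.pos ι := by
  have h := mem_Dmax_of 𝒮 𝒯 (unit_of_mem_pos 𝒮) hQ
    (Matrix.of fun i (c : Fin 1 × ι) => if c.2 = i then 1 else 0)
  have key : mconj (Matrix.of fun i (c : Fin 1 × ι) => if c.2 = i then 1 else 0)
      (tkron (Matrix.of fun _ _ : Fin 1 => 𝒮.unit) Q)
      = Matrix.of fun i j => 𝒮.unit ⊗ₜ[ℂ] Q i j := by
    ext i j
    simp [mconj_apply, tkron, Fintype.sum_prod_type, apply_ite (star : ℂ → ℂ),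
      ite_mul, mul_ite, ite_smul, Finset.sum_ite_eq']
  rwa [key] at h

lemma smul_diag_mem_Dmax (𝒮 : OpSys V) (𝒯 : OpSys W) {ι : Type} [Fintype ι] [DecidableEq ι]
    {ε : ℝ} (hε : 0 ≤ ε) :
    (ε : ℂ) • Matrix.diagonal (fun _ : ι => 𝒮.unit ⊗ₜ[ℂ] 𝒯.unit) ∈ Dmax 𝒮.pos 𝒯.pos ι := by
  apply Dmax_smul 𝒮 𝒯 hε
  have : Matrix.diagonal (fun _ : ι => 𝒮.unit ⊗ₜ[ℂ] 𝒯.unit)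
      = Matrix.of fun i j => 𝒮.unit ⊗ₜ[ℂ] (Matrix.diagonal (fun _ : ι => 𝒯.unit) i j) := by
    ext i j
    by_cases h : i = j <;> simp [Matrix.diagonal, h, TensorProduct.tmul_zero]
  rw [this]
  exact unit_tmul_mem_Dmax 𝒮 𝒯 (𝒯.unit_pos ι)

/-- The auxiliary matrix `S` with `α (1 ⊗ R) α* = u ⊗ S`. -/
def Smat {ι κ₁ κ₂ : Type} [Fintype κ₁] [Fintype κ₂]
    (α : Matrix ι (κ₁ × κ₂) ℂ) (R : Matrix κ₂ κ₂ W) : Matrix ι ι W :=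
  Matrix.of fun i j => ∑ a : κ₁, ∑ b : κ₂, ∑ b' : κ₂, (α i (a, b) * star (α j (a, b'))) • R b b'

lemma Smat_mem_pos (𝒯 : OpSys W) {ι κ₁ κ₂ : Type} [Fintype ι] [DecidableEq ι]
    [Fintype κ₁] [DecidableEq κ₁] [Fintype κ₂] [DecidableEq κ₂]
    (α : Matrix ι (κ₁ × κ₂) ℂ) {R : Matrix κ₂ κ₂ W} (hR : R ∈ 𝒯.pos κ₂) :
    Smat α R ∈ 𝒯.pos ι := by
  have hX : (Matrix.of fun (c d : κ₁ × κ₂) => if c.1 = d.1 then R c.2 d.2 else 0)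
      ∈ 𝒯.pos (κ₁ × κ₂) := by
    have hsum : (Matrix.of fun (c d : κ₁ × κ₂) => if c.1 = d.1 then R c.2 d.2 else 0)
        = ∑ a : κ₁, mconj (Matrix.of fun (c : κ₁ × κ₂) (b : κ₂) =>
            if c.1 = a ∧ c.2 = b then 1 else 0) R := by
      ext c d
      simp [mconj_apply, Matrix.sum_apply, apply_ite (star : ℂ → ℂ), ite_and,
        ite_mul, mul_ite, ite_smul, Finset.sum_ite_eq']
    rw [hsum]
    exact sum_mem_pos 𝒯 _ _ fun a _ => 𝒯.pos_conj _ _ _ _ hR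
  have hS : Smat α R = mconj α
      (Matrix.of fun (c d : κ₁ × κ₂) => if c.1 = d.1 then R c.2 d.2 else 0) := by
    ext i j
    simp [Smat, mconj_apply, Fintype.sum_prod_type, smul_ite, Finset.sum_ite_eq']
  rw [hS]
  exact 𝒯.pos_conj _ _ _ _ hX

lemma mstar_Smat (𝒯 : OpSys W) {ι κ₁ κ₂ : Type} [Fintype κ₁] [Fintype κ₂] [DecidableEq κ₂]
    (α : Matrix ι (κ₁ × κ₂) ℂ) {R : Matrix κ₂ κ₂ W} (hR : R ∈ 𝒯.pos κ₂) :
    mstar (Smat α R) = Smat α R := by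
  have hRs : ∀ b b', star (R b b') = R b' b := by
    intro b b'
    have h := 𝒯.pos_star κ₂ R hR
    exact congrFun (congrFun h b') b
  ext i j
  simp only [mstar, Matrix.of_apply, Smat, star_sum, star_smul, star_mul', star_star]
  refine Finset.sum_congr rfl fun a _ => ?_
  rw [Finset.sum_comm]
  refine Finset.sum_congr rfl fun b _ => Finset.sum_congr rfl fun b' _ => ?_
  rw [hRs, mul_comm]

lemma mconj_tkron_diag_unit (𝒮 : OpSys V) {ι κ₁ κ₂ : Type} [Fintype κ₁] [DecidableEq κ₁]
    [Fintype κ₂] (α : Matrix ι (κ₁ × κ₂) ℂ) (R : Matrix κ₂ κ₂ W) :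
    mconj α (tkron (Matrix.diagonal fun _ : κ₁ => 𝒮.unit) R)
      = Matrix.of fun i j => 𝒮.unit ⊗ₜ[ℂ] (Smat α R i j) := by
  ext i j
  have rhs : (Matrix.of fun i j => 𝒮.unit ⊗ₜ[ℂ] (Smat α R i j)) i j
      = ∑ a : κ₁, ∑ b : κ₂, ∑ b' : κ₂,
          (α i (a, b) * star (α j (a, b'))) • (𝒮.unit ⊗ₜ[ℂ] R b b') := by
    simp [Smat, TensorProduct.tmul_sum, TensorProduct.tmul_smul]
  rw [rhs, mconj_apply]
  simp only [Fintype.sum_prod_type, tkron, Matrix.of_apply, Matrix.diagonal_apply,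
    TensorProduct.ite_tmul, smul_ite_zero]
  refine Finset.sum_congr rfl fun a _ => Finset.sum_congr rfl fun b _ => ?_
  rw [Finset.sum_comm]
  simp [Finset.sum_ite_eq]

end Helpers2
/-- **Theorem 3.4 (projectivity of the maximal tensor product).**
If `Φ : S₁ → S₂` is a complete order quotient map, then
`Φ ⊗ id_T : S₁ ⊗_max T → S₂ ⊗_max T` is a complete order quotient map. -/
theorem maxTensor_projective {V₁ V₂ W : Type}
    [AddCommGroup V₁] [Module ℂ V₁] [StarAddMonoid V₁] [StarModule ℂ V₁]
    [AddCommGroup V₂] [Module ℂ V₂] [StarAddMonoid V₂] [StarModule ℂ V₂]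
    [AddCommGroup W] [Module ℂ W] [StarAddMonoid W] [StarModule ℂ W]
    (𝒮₁ : OpSys V₁) (𝒮₂ : OpSys V₂) (𝒯 : OpSys W)
    (Φ : V₁ →ₗ[ℂ] V₂) (hΦ : IsCOQuotientMap 𝒮₁ 𝒮₂ Φ) :
    (TensorProduct.map Φ (LinearMap.id (R := ℂ) (M := W)))
        (𝒮₁.unit ⊗ₜ[ℂ] 𝒯.unit) = 𝒮₂.unit ⊗ₜ[ℂ] 𝒯.unit ∧
    Function.Surjective (TensorProduct.map Φ (LinearMap.id (R := ℂ) (M := W))) ∧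
    (∀ (ι : Type) [Fintype ι] [DecidableEq ι],
      ∀ Z ∈ maxPos 𝒮₁.pos 𝒮₁.unit 𝒯.pos 𝒯.unit ι,
        Z.map (TensorProduct.map Φ (LinearMap.id (R := ℂ) (M := W))) ∈
          maxPos 𝒮₂.pos 𝒮₂.unit 𝒯.pos 𝒯.unit ι) ∧
    (∀ (ι : Type) [Fintype ι] [DecidableEq ι],
      ∀ Z ∈ maxPos 𝒮₂.pos 𝒮₂.unit 𝒯.pos 𝒯.unit ι, ∀ ε : ℝ, 0 < ε →
        ∃ P : Matrix ι ι (V₁ ⊗[ℂ] W),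
          P + (ε : ℂ) • Matrix.diagonal (fun _ => 𝒮₁.unit ⊗ₜ[ℂ] 𝒯.unit) ∈
            maxPos 𝒮₁.pos 𝒮₁.unit 𝒯.pos 𝒯.unit ι ∧
          P.map (TensorProduct.map Φ (LinearMap.id (R := ℂ) (M := W))) = Z) := by
  obtain ⟨⟨hu, hcp⟩, hsurj, hlift⟩ := hΦ
  set F := TensorProduct.map Φ (LinearMap.id (R := ℂ) (M := W)) with hF
  have hmapdiag : ∀ (ι : Type) [Fintype ι] [DecidableEq ι], ∀ c : ℂ,
      ((c • Matrix.diagonal fun _ : ι => 𝒮₁.unit ⊗ₜ[ℂ] 𝒯.unit).map F)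
        = c • Matrix.diagonal fun _ : ι => 𝒮₂.unit ⊗ₜ[ℂ] 𝒯.unit := by
    intro ι _ _ c
    ext i j
    by_cases h : i = j <;>
      simp [Matrix.map_apply, Matrix.diagonal, h, hF, _root_.map_smul, hu]
  have hmaptk : ∀ (k l : ℕ) (P : Matrix (Fin k) (Fin k) V₁) (Q : Matrix (Fin l) (Fin l) W),
      (tkron P Q).map F = tkron (P.map Φ) Q := by
    intro k l P Q
    ext p q
    simp [tkron, hF, Matrix.map_apply]
  refine ⟨by simp [hF, hu], TensorProduct.map_surjective hsurj (fun w => ⟨w, rfl⟩), ?_, ?_⟩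
  · intro ι _ _ Z hZ ε hε
    obtain ⟨k, l, P, Q, α, hP, hQ, hEq⟩ := hZ ε hε
    refine ⟨k, l, P.map Φ, Q, α, hcp _ _ hP, hQ, ?_⟩
    have h1 : Z.map F + (ε : ℂ) • Matrix.diagonal (fun _ : ι => 𝒮₂.unit ⊗ₜ[ℂ] 𝒯.unit)
        = (Z + (ε : ℂ) • Matrix.diagonal (fun _ : ι => 𝒮₁.unit ⊗ₜ[ℂ] 𝒯.unit)).map F := by
      have hadd : (Z + (ε : ℂ) • Matrix.diagonal (fun _ : ι => 𝒮₁.unit ⊗ₜ[ℂ] 𝒯.unit)).map F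
          = Z.map F + ((ε : ℂ) • Matrix.diagonal (fun _ : ι => 𝒮₁.unit ⊗ₜ[ℂ] 𝒯.unit)).map F := by
        ext i j; simp [Matrix.map_apply, map_add]
      rw [hadd, hmapdiag ι (ε : ℂ)]
    rw [h1, hEq, map_mconj, hmaptk]
  · intro ι _ _ Z hZ ε hε
    have hε2 : (0 : ℝ) < ε / 2 := by positivity
    obtain ⟨k, l, Q₂, R, α, hQ₂, hR, hEq⟩ := hZ (ε / 2) hε2
    obtain ⟨r, hr, hrpos⟩ := 𝒯.order_unit ι (Smat α R) (mstar_Smat 𝒯 α hR)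
    set δ := ε / (2 * r) with hδdef
    have hδ : 0 < δ := by positivity
    obtain ⟨P₁, hP₁pos, hP₁map⟩ := hlift (Fin k) Q₂ hQ₂ δ hδ
    set D₁ : Matrix ι ι (V₁ ⊗[ℂ] W) :=
      Matrix.diagonal (fun _ => 𝒮₁.unit ⊗ₜ[ℂ] 𝒯.unit) with hD₁
    set U : Matrix ι ι (V₁ ⊗[ℂ] W) :=
      Matrix.of fun i j => 𝒮₁.unit ⊗ₜ[ℂ] (Smat α R i j) with hU
    have hδr : ((δ : ℂ)) * (r : ℂ) = ((ε / 2 : ℝ) : ℂ) := by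
      rw [← Complex.ofReal_mul, hδdef]
      congr 1
      field_simp
    refine ⟨mconj α (tkron P₁ R) - ((ε / 2 : ℝ) : ℂ) • D₁, ?_, ?_⟩
    · intro ε' hε'
      have hA : mconj α (tkron (P₁ + (δ : ℂ) • Matrix.diagonal (fun _ => 𝒮₁.unit)) R)
          ∈ Dmax 𝒮₁.pos 𝒯.pos ι := ⟨k, l, _, R, α, hP₁pos, hR, rfl⟩
      have hB : (δ : ℂ) • (Matrix.of fun i j => 𝒮₁.unit ⊗ₜ[ℂ]
            (((r : ℂ) • Matrix.diagonal (fun _ : ι => 𝒯.unit) - Smat α R) i j))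
          ∈ Dmax 𝒮₁.pos 𝒯.pos ι :=
        Dmax_smul 𝒮₁ 𝒯 hδ.le (unit_tmul_mem_Dmax 𝒮₁ 𝒯 hrpos)
      have hC : (ε' : ℂ) • D₁ ∈ Dmax 𝒮₁.pos 𝒯.pos ι :=
        smul_diag_mem_Dmax 𝒮₁ 𝒯 hε'.le
      have e1 : mconj α (tkron (P₁ + (δ : ℂ) • Matrix.diagonal (fun _ => 𝒮₁.unit)) R)
          = mconj α (tkron P₁ R) + (δ : ℂ) • U := by
        rw [tkron_add_left, mconj_add, tkron_smul_left, mconj_smul,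
          mconj_tkron_diag_unit, hU]
      have e2 : (δ : ℂ) • (Matrix.of fun i j => 𝒮₁.unit ⊗ₜ[ℂ]
            (((r : ℂ) • Matrix.diagonal (fun _ : ι => 𝒯.unit) - Smat α R) i j))
          = ((ε / 2 : ℝ) : ℂ) • D₁ - (δ : ℂ) • U := by
        ext i j
        simp only [Matrix.smul_apply, Matrix.sub_apply, Matrix.of_apply, hD₁, hU,
          TensorProduct.tmul_sub, TensorProduct.tmul_smul, smul_sub, smul_smul, hδr]
        by_cases h : i = j <;> simp [Matrix.diagonal, h, TensorProduct.tmul_zero]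
      have key : mconj α (tkron P₁ R) - ((ε / 2 : ℝ) : ℂ) • D₁ + (ε : ℂ) • D₁
            + (ε' : ℂ) • D₁
          = mconj α (tkron (P₁ + (δ : ℂ) • Matrix.diagonal (fun _ => 𝒮₁.unit)) R)
            + (δ : ℂ) • (Matrix.of fun i j => 𝒮₁.unit ⊗ₜ[ℂ]
              (((r : ℂ) • Matrix.diagonal (fun _ : ι => 𝒯.unit) - Smat α R) i j))
            + (ε' : ℂ) • D₁ := by
        rw [e1, e2]
        push_cast
        module
      rw [key]
      exact Dmax_add 𝒮₁ 𝒯 (Dmax_add 𝒮₁ 𝒯 hA hB) hC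
    · have hm : (mconj α (tkron P₁ R)).map F
          = Z + ((ε / 2 : ℝ) : ℂ) • Matrix.diagonal (fun _ : ι => 𝒮₂.unit ⊗ₜ[ℂ] 𝒯.unit) := by
        rw [map_mconj, hmaptk, hP₁map, ← hEq]
      have hsub : ((mconj α (tkron P₁ R) - ((ε / 2 : ℝ) : ℂ) • D₁).map F)
          = (mconj α (tkron P₁ R)).map F
            - ((ε / 2 : ℝ) : ℂ) • Matrix.diagonal (fun _ : ι => 𝒮₂.unit ⊗ₜ[ℂ] 𝒯.unit) := by
        have hsub' : ((mconj α (tkron P₁ R) - ((ε / 2 : ℝ) : ℂ) • D₁).map F)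
            = (mconj α (tkron P₁ R)).map F - (((ε / 2 : ℝ) : ℂ) • D₁).map F := by
          ext i j; simp [Matrix.map_apply, map_sub]
        rw [hsub', hmapdiag ι ((ε / 2 : ℝ) : ℂ)]
      rw [hsub, hm]
      abel
end

section
/- Let S and T be operator systems with complete norms, Φ : S → T a unital completely positive surjection, and define C_n = { y ∈ M_n(T) : ∀ε>0, ∃x ∈ M_n(S), x + εI_n ⊗ 1_S ∈ M_n(S)^+ and Φ_n(x) = y }. Then C_n is a norm-closed cone contained in M_n(T)^+ and containing Φ_n(M_n(S)^+). -/
open scoped TensorProduct Kronecker ComplexOrder Matrix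

/-- The set `C_n` of elements of `Mₙ(T)` admitting approximate positive lifts. -/
def liftCone {V W : Type}
    [AddCommGroup V] [Module ℂ V] [StarAddMonoid V] [StarModule ℂ V]
    [AddCommGroup W] [Module ℂ W] [StarAddMonoid W] [StarModule ℂ W]
    (𝒮 : OpSys V) (𝒯 : OpSys W) (Φ : V →ₗ[ℂ] W) (n : ℕ) :
    Set (Matrix (Fin n) (Fin n) W) :=
  { y | ∀ ε : ℝ, 0 < ε → ∃ x : Matrix (Fin n) (Fin n) V,
      x + (ε : ℂ) • Matrix.diagonal (fun _ => 𝒮.unit) ∈ 𝒮.pos (Fin n) ∧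
      x.map Φ = y }

section ProofAux

open Matrix

namespace LiftAux

variable {V W : Type}
variable [AddCommGroup V] [Module ℂ V] [StarAddMonoid V] [StarModule ℂ V]
variable [AddCommGroup W] [Module ℂ W] [StarAddMonoid W] [StarModule ℂ W]
variable {ι κ ι' κ' : Type}

/-! ### mstar lemmas -/

lemma mstar_apply (X : Matrix ι κ V) (i : κ) (j : ι) : mstar X i j = star (X j i) := rfl

lemma mstar_add (X Y : Matrix ι κ V) : mstar (X + Y) = mstar X + mstar Y := by
  ext i j; simp [mstar, star_add]

lemma mstar_neg (X : Matrix ι κ V) : mstar (-X) = -mstar X := by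
  ext i j; simp [mstar]

lemma mstar_sub (X Y : Matrix ι κ V) : mstar (X - Y) = mstar X - mstar Y := by
  ext i j; simp [mstar, star_sub]

lemma mstar_zero : mstar (0 : Matrix ι κ V) = 0 := by
  ext i j; simp [mstar]

lemma mstar_mstar (X : Matrix ι κ V) : mstar (mstar X) = X := by
  ext i j; simp [mstar]

lemma mstar_smul (c : ℂ) (X : Matrix ι κ V) : mstar (c • X) = star c • mstar X := by
  ext i j; simp [mstar, star_smul]

lemma mstar_fromBlocks {a b c d : Type} (A : Matrix a c V) (B : Matrix a d V)
    (C : Matrix b c V) (D : Matrix b d V) :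
    mstar (fromBlocks A B C D) = fromBlocks (mstar A) (mstar C) (mstar B) (mstar D) := by
  ext i j; cases i <;> cases j <;> rfl

lemma mstar_diagonal [DecidableEq ι] (d : ι → V) :
    mstar (diagonal d) = diagonal fun i => star (d i) := by
  ext i j
  rcases eq_or_ne i j with h | h
  · subst h; simp [mstar]
  · simp [mstar, diagonal_apply_ne _ h, diagonal_apply_ne _ (Ne.symm h)]

/-! ### selection matrices and sesquilinear conjugation -/

/-- A matrix with at most one nonzero entry per row. -/
def sel [DecidableEq ι] (g : ι' → ι) (s : ι' → ℂ) : Matrix ι' ι ℂ :=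
  Matrix.of fun i k => if k = g i then s i else 0

/-- `α X β*`. -/
def bconj [Fintype ι] [Fintype κ] (α : Matrix ι' ι ℂ) (β : Matrix κ' κ ℂ)
    (X : Matrix ι κ V) : Matrix ι' κ' V :=
  Matrix.of fun i j => ∑ k, ∑ l, (α i k * star (β j l)) • X k l

lemma mconj_eq_bconj [Fintype ι] (α : Matrix ι' ι ℂ) (X : Matrix ι ι V) :
    mconj α X = bconj α α X := rfl

lemma bconj_add_left [Fintype ι] [Fintype κ] (α α' : Matrix ι' ι ℂ) (β : Matrix κ' κ ℂ)
    (X : Matrix ι κ V) : bconj (α + α') β X = bconj α β X + bconj α' β X := by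
  ext i j
  simp [bconj, add_mul, add_smul, Finset.sum_add_distrib]

lemma bconj_add_right [Fintype ι] [Fintype κ] (α : Matrix ι' ι ℂ) (β β' : Matrix κ' κ ℂ)
    (X : Matrix ι κ V) : bconj α (β + β') X = bconj α β X + bconj α β' X := by
  ext i j
  simp [bconj, mul_add, add_smul, Finset.sum_add_distrib]

lemma bconj_sel [Fintype ι] [DecidableEq ι] [Fintype κ] [DecidableEq κ]
    (g : ι' → ι) (s : ι' → ℂ) (g' : κ' → κ) (t : κ' → ℂ) (X : Matrix ι κ V) :
    bconj (sel g s) (sel g' t) X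
      = Matrix.of fun i j => (s i * star (t j)) • X (g i) (g' j) := by
  ext i j
  simp only [bconj, sel, Matrix.of_apply]
  rw [Finset.sum_eq_single (g i)]
  · rw [Finset.sum_eq_single (g' j)]
    · simp
    · intro b _ hb; simp [hb]
    · simp
  · intro b _ hb; simp [hb]
  · simp

lemma mconj_sel [Fintype ι] [DecidableEq ι] (g : ι' → ι) (s : ι' → ℂ) (X : Matrix ι ι V) :
    mconj (sel g s) X = Matrix.of fun i j => (s i * star (s j)) • X (g i) (g j) := by
  rw [mconj_eq_bconj, bconj_sel]

end LiftAux

end ProofAux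
section ProofAux2

open Matrix LiftAux

set_option linter.unusedSectionVars false
set_option linter.unusedVariables false

namespace LiftAux

variable {V W : Type}
variable [AddCommGroup V] [Module ℂ V] [StarAddMonoid V] [StarModule ℂ V]
variable [AddCommGroup W] [Module ℂ W] [StarAddMonoid W] [StarModule ℂ W]
variable {ι κ : Type} [Fintype ι] [DecidableEq ι] [Fintype κ] [DecidableEq κ]

lemma sqrt_mul_star (r : ℝ) (hr : 0 ≤ r) :
    ((Real.sqrt r : ℝ) : ℂ) * star ((Real.sqrt r : ℝ) : ℂ) = (r : ℂ) := by
  rw [Complex.star_def, Complex.conj_ofReal, ← Complex.ofReal_mul, Real.mul_self_sqrt hr]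

lemma pos_smul (𝒮 : OpSys V) {r : ℝ} (hr : 0 ≤ r) {X : Matrix ι ι V}
    (hX : X ∈ 𝒮.pos ι) : (r : ℂ) • X ∈ 𝒮.pos ι := by
  have h := 𝒮.pos_conj ι ι (sel id fun _ => ((Real.sqrt r : ℝ) : ℂ)) X hX
  rw [mconj_sel] at h
  simp only [sqrt_mul_star r hr] at h
  exact h

/-- The standard `2×2`-block matrix used to define the matrix norms. -/
def blk (𝒮 : OpSys V) (X : Matrix ι κ V) (r : ℝ) : Matrix (ι ⊕ κ) (ι ⊕ κ) V :=
  fromBlocks ((r : ℂ) • diagonal fun _ => 𝒮.unit) X (mstar X)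
    ((r : ℂ) • diagonal fun _ => 𝒮.unit)

lemma normLE_iff (𝒮 : OpSys V) (X : Matrix ι κ V) (r : ℝ) :
    𝒮.normLE X r ↔ blk 𝒮 X r ∈ 𝒮.pos (ι ⊕ κ) := Iff.rfl

lemma blk_add (𝒮 : OpSys V) (X Y : Matrix ι κ V) (r s : ℝ) :
    blk 𝒮 (X + Y) (r + s) = blk 𝒮 X r + blk 𝒮 Y s := by
  ext i j
  cases i <;> cases j <;>
    simp [blk, mstar_add, Complex.ofReal_add, add_smul, Matrix.add_apply]

lemma blk_zero_mem (𝒮 : OpSys V) {r : ℝ} (hr : 0 ≤ r) :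
    blk 𝒮 (0 : Matrix ι κ V) r ∈ 𝒮.pos (ι ⊕ κ) := by
  have : blk 𝒮 (0 : Matrix ι κ V) r
      = (r : ℂ) • diagonal (fun _ => 𝒮.unit) := by
    ext i j
    rcases i with i | i <;> rcases j with j | j <;>
      simp [blk, mstar_zero, diagonal, Matrix.smul_apply]
  rw [this]
  exact pos_smul 𝒮 hr (𝒮.unit_pos _)

lemma normLE_zero (𝒮 : OpSys V) {r : ℝ} (hr : 0 ≤ r) :
    𝒮.normLE (0 : Matrix ι κ V) r := blk_zero_mem 𝒮 hr

lemma normLE_add (𝒮 : OpSys V) {X Y : Matrix ι κ V} {r s : ℝ}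
    (hX : 𝒮.normLE X r) (hY : 𝒮.normLE Y s) : 𝒮.normLE (X + Y) (r + s) := by
  rw [normLE_iff, blk_add]
  exact 𝒮.pos_add _ _ _ hX hY

lemma normLE_mono (𝒮 : OpSys V) {X : Matrix ι κ V} {r r' : ℝ}
    (hX : 𝒮.normLE X r) (h : r ≤ r') : 𝒮.normLE X r' := by
  have h2 := normLE_add 𝒮 hX (normLE_zero (ι := ι) (κ := κ) 𝒮 (by linarith : (0:ℝ) ≤ r' - r))
  rw [add_zero, show r + (r' - r) = r' by ring] at h2
  exact h2

lemma normLE_neg (𝒮 : OpSys V) {X : Matrix ι κ V} {r : ℝ}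
    (hX : 𝒮.normLE X r) : 𝒮.normLE (-X) r := by
  have h := 𝒮.pos_conj _ _ (sel (id : ι ⊕ κ → ι ⊕ κ)
    (Sum.elim (fun _ : ι => (1 : ℂ)) fun _ : κ => (-1 : ℂ))) _ hX
  rw [mconj_sel] at h
  rw [normLE_iff]
  convert h using 1
  ext i j
  rcases i with i | i <;> rcases j with j | j <;>
    simp [blk, mstar_neg, Matrix.neg_apply]

lemma normLE_smul (𝒮 : OpSys V) {X : Matrix ι κ V} {r : ℝ} {c : ℝ} (hc : 0 ≤ c)
    (hX : 𝒮.normLE X r) : 𝒮.normLE ((c : ℂ) • X) (c * r) := by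
  have h := 𝒮.pos_conj _ _ (sel (id : ι ⊕ κ → ι ⊕ κ)
    fun _ => ((Real.sqrt c : ℝ) : ℂ)) _ hX
  rw [mconj_sel] at h
  simp only [sqrt_mul_star c hc] at h
  have h2 : (c : ℂ) • blk 𝒮 X r ∈ 𝒮.pos (ι ⊕ κ) := h
  rw [normLE_iff]
  convert h2 using 1
  rw [blk, blk, mstar_smul, Complex.star_def, Complex.conj_ofReal]
  ext i j
  rcases i with i | i <;> rcases j with j | j <;>
    simp [Matrix.smul_apply, smul_smul, ← Complex.ofReal_mul, Complex.coe_smul]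

lemma normLE_mstar (𝒮 : OpSys V) {X : Matrix ι κ V} {r : ℝ}
    (hX : 𝒮.normLE X r) : 𝒮.normLE (mstar X) r := by
  have h := 𝒮.pos_conj _ _ (sel (Sum.elim (Sum.inr : κ → ι ⊕ κ) (Sum.inl : ι → ι ⊕ κ))
    (fun _ => (1 : ℂ))) _ hX
  rw [mconj_sel] at h
  rw [normLE_iff]
  convert h using 1
  ext i j
  rcases i with i | i <;> rcases j with j | j <;>
    simp [blk, mstar_mstar]

lemma mstar_smul_diag (𝒮 : OpSys V) (r : ℝ) :
    mstar ((r : ℂ) • diagonal fun _ : ι => 𝒮.unit) = (r : ℂ) • diagonal fun _ : ι => 𝒮.unit := by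
  rw [mstar_smul, mstar_diagonal, Complex.star_def, Complex.conj_ofReal]
  simp [𝒮.unit_star]

lemma mstar_blk (𝒮 : OpSys V) (X : Matrix ι κ V) (r : ℝ) :
    mstar (blk 𝒮 X r) = blk 𝒮 X r := by
  rw [blk, mstar_fromBlocks, mstar_mstar, mstar_smul_diag, mstar_smul_diag]

lemma blk_add_diag (𝒮 : OpSys V) (X : Matrix ι κ V) (r ε : ℝ) :
    blk 𝒮 X r + (ε : ℂ) • diagonal (fun _ => 𝒮.unit) = blk 𝒮 X (r + ε) := by
  ext i j
  rcases i with i | i <;> rcases j with j | j <;>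
    simp [blk, diagonal, Matrix.add_apply, Matrix.smul_apply, Complex.ofReal_add, add_smul]

lemma normLE_arch (𝒮 : OpSys V) {X : Matrix ι κ V} {r : ℝ}
    (h : ∀ ε : ℝ, 0 < ε → 𝒮.normLE X (r + ε)) : 𝒮.normLE X r := by
  rw [normLE_iff]
  refine 𝒮.archimedean _ _ (mstar_blk 𝒮 X r) fun ε hε => ?_
  rw [blk_add_diag]
  exact h ε hε

lemma normLE_exists (𝒮 : OpSys V) (X : Matrix ι κ V) : ∃ r, 0 ≤ r ∧ 𝒮.normLE X r := by
  obtain ⟨r, hr, hpos⟩ := 𝒮.order_unit (ι ⊕ κ) (blk 𝒮 X 0) (mstar_blk 𝒮 X 0)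
  have he : (r : ℂ) • diagonal (fun _ => 𝒮.unit) - blk 𝒮 X 0 = blk 𝒮 (-X) r := by
    ext i j
    rcases i with i | i <;> rcases j with j | j <;>
      simp [blk, mstar_neg, diagonal, Matrix.sub_apply, Matrix.smul_apply, Matrix.neg_apply]
  rw [he] at hpos
  have := normLE_neg 𝒮 hpos
  rw [neg_neg] at this
  exact ⟨r, le_of_lt hr, this⟩

end LiftAux
end ProofAux2
section ProofAux3

open Matrix

set_option linter.unusedSectionVars false
set_option linter.unusedVariables false
set_option maxHeartbeats 1000000

namespace LiftAux

variable {V W : Type}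
variable [AddCommGroup V] [Module ℂ V] [StarAddMonoid V] [StarModule ℂ V]
variable [AddCommGroup W] [Module ℂ W] [StarAddMonoid W] [StarModule ℂ W]
variable {ι κ : Type} [Fintype ι] [DecidableEq ι] [Fintype κ] [DecidableEq κ]

lemma normLE_entry (𝒮 : OpSys V) {X : Matrix ι κ V} {r : ℝ} (hX : 𝒮.normLE X r)
    (i : ι) (j : κ) : 𝒮.elemNormLE (X i j) r := by
  have h := 𝒮.pos_conj _ _ (sel (Sum.elim (fun _ : Fin 1 => (Sum.inl i : ι ⊕ κ))
      fun _ : Fin 1 => Sum.inr j) fun _ => (1 : ℂ)) _ hX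
  rw [mconj_sel] at h
  show blk 𝒮 (Matrix.of fun _ _ : Fin 1 => X i j) r ∈ 𝒮.pos (Fin 1 ⊕ Fin 1)
  convert h using 1
  ext a b
  rcases a with a | a <;> rcases b with b | b <;>
    · have hab : a = b := Subsingleton.elim a b
      subst hab
      simp [blk, Matrix.diagonal_apply, mstar_apply]

/-- Matrix with a single (possibly) nonzero entry. -/
def single (i j : ι) (x : V) : Matrix ι ι V :=
  Matrix.of fun a b => if a = i ∧ b = j then x else 0

lemma sum_single (M : Matrix ι ι V) :
    ∑ p : ι × ι, single p.1 p.2 (M p.1 p.2) = M := by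
  ext a b
  rw [Matrix.sum_apply]
  rw [Finset.sum_eq_single (a, b)]
  · simp [single]
  · intro p _ hp
    have : ¬(a = p.1 ∧ b = p.2) := by
      rintro ⟨rfl, rfl⟩; exact hp rfl
    simp [single, this]
  · simp

lemma normLE_single (𝒮 : OpSys V) {x : V} {r : ℝ} (hx : 𝒮.elemNormLE x r) (hr : 0 ≤ r)
    (i j : ι) : 𝒮.normLE (single i j x) r := by
  have hx' : blk 𝒮 (Matrix.of fun _ _ : Fin 1 => x) r ∈ 𝒮.pos (Fin 1 ⊕ Fin 1) := hx
  have h1 := 𝒮.pos_conj _ _ (sel (Sum.elim (fun _ : ι => (Sum.inl 0 : Fin 1 ⊕ Fin 1))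
      fun _ : ι => Sum.inr 0)
      (Sum.elim (fun a : ι => if a = i then (1 : ℂ) else 0)
        fun a : ι => if a = j then (1 : ℂ) else 0)) _ hx'
  rw [mconj_sel] at h1
  have h2 := 𝒮.pos_conj _ _ (sel (id : ι ⊕ ι → ι ⊕ ι)
      (Sum.elim (fun a : ι => if a = i then 0 else ((Real.sqrt r : ℝ) : ℂ))
        fun a : ι => if a = j then 0 else ((Real.sqrt r : ℝ) : ℂ))) _ (𝒮.unit_pos (ι ⊕ ι))
  rw [mconj_sel] at h2
  have hq : ((Real.sqrt r : ℝ) : ℂ) * ((Real.sqrt r : ℝ) : ℂ) = ((r : ℝ) : ℂ) := by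
    rw [← Complex.ofReal_mul, Real.mul_self_sqrt hr]
  have hsum := 𝒮.pos_add _ _ _ h1 h2
  show blk 𝒮 (single i j x) r ∈ 𝒮.pos (ι ⊕ ι)
  convert hsum using 1
  ext a b
  rcases a with a | a <;> rcases b with b | b <;>
    simp only [blk, single, Matrix.add_apply, Matrix.of_apply, fromBlocks_apply₁₁,
      fromBlocks_apply₁₂, fromBlocks_apply₂₁, fromBlocks_apply₂₂, Sum.elim_inl, Sum.elim_inr,
      id_eq, Matrix.smul_apply, Matrix.diagonal_apply, Sum.inl.injEq, Sum.inr.injEq,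
      mstar_apply, reduceCtorEq] <;>
    split_ifs <;>
    simp_all [sqrt_mul_star r hr, hq, star_zero, star_one]

lemma eq_zero_of_normLE (𝒮 : OpSys V) {X : Matrix ι κ V}
    (h : ∀ ε : ℝ, 0 < ε → 𝒮.normLE X ε) : X = 0 := by
  have hB : blk 𝒮 X 0 ∈ 𝒮.pos (ι ⊕ κ) := by
    rw [← normLE_iff]
    exact normLE_arch 𝒮 fun ε hε => by simpa using h ε hε
  have hB' : blk 𝒮 (-X) 0 ∈ 𝒮.pos (ι ⊕ κ) := by
    rw [← normLE_iff]
    exact normLE_arch 𝒮 fun ε hε => by simpa using normLE_neg 𝒮 (h ε hε)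
  have key : ∀ (i : ι) (j : κ) (c : ℂ), star c • X i j + c • star (X i j) = 0 := by
    intro i j c
    have conj1 := 𝒮.pos_conj _ _ (sel (fun _ : Fin 1 => (Sum.inl i : ι ⊕ κ)) (fun _ => (1 : ℂ))
        + sel (fun _ : Fin 1 => Sum.inr j) fun _ => c) _ hB
    have conj2 := 𝒮.pos_conj _ _ (sel (fun _ : Fin 1 => (Sum.inl i : ι ⊕ κ)) (fun _ => (1 : ℂ))
        + sel (fun _ : Fin 1 => Sum.inr j) fun _ => c) _ hB'
    rw [mconj_eq_bconj, bconj_add_left, bconj_add_right, bconj_add_right, bconj_sel,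
      bconj_sel, bconj_sel, bconj_sel] at conj1 conj2
    refine 𝒮.proper _ ?_ ?_
    · convert conj1 using 1
      ext a b
      simp [blk, mstar_apply, Matrix.add_apply]
    · convert conj2 using 1
      ext a b
      simp only [blk, mstar_apply, Matrix.add_apply, Matrix.of_apply, fromBlocks_apply₁₁,
        fromBlocks_apply₁₂, fromBlocks_apply₂₁, fromBlocks_apply₂₂, Matrix.neg_apply,
        Complex.ofReal_zero, zero_smul, Matrix.smul_apply, Matrix.zero_apply, star_neg,
        smul_neg, neg_add_rev, smul_zero, one_mul, mul_one, star_one, add_zero, zero_add]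
      abel
  ext i j
  have k1 := key i j 1
  have k2 := key i j Complex.I
  simp only [star_one, one_smul] at k1
  have hIstar : star Complex.I = -Complex.I := Complex.star_def ▸ Complex.conj_I
  rw [hIstar] at k2
  have k2' : Complex.I • (star (X i j) - X i j) = 0 := by
    rw [smul_sub]
    rw [neg_smul] at k2
    linear_combination (norm := module) k2
  have hstar : star (X i j) = X i j := by
    have := (smul_eq_zero.mp k2').resolve_left Complex.I_ne_zero
    rwa [sub_eq_zero] at this
  rw [hstar] at k1
  have : (2 : ℂ) • X i j = 0 := by rw [two_smul]; exact k1
  have := (smul_eq_zero.mp this).resolve_left two_ne_zero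
  simpa using this

lemma selfadj_small (𝒮 : OpSys V) {X : Matrix ι ι V} {r : ℝ}
    (hsa : mstar X = X) (hX : 𝒮.normLE X r) :
    X + (r : ℂ) • diagonal (fun _ => 𝒮.unit) ∈ 𝒮.pos ι := by
  have hX' : blk 𝒮 X r ∈ 𝒮.pos (ι ⊕ ι) := hX
  have h := 𝒮.pos_conj _ _ (sel (Sum.inl : ι → ι ⊕ ι) (fun _ => (1 : ℂ))
      + sel (Sum.inr : ι → ι ⊕ ι) fun _ => (1 : ℂ)) _ hX' 
  rw [mconj_eq_bconj, bconj_add_left, bconj_add_right, bconj_add_right, bconj_sel,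
    bconj_sel, bconj_sel, bconj_sel] at h
  have hsum : (Matrix.of fun a b : ι => ((1:ℂ) * star (1:ℂ)) • blk 𝒮 X r (Sum.inl a) (Sum.inl b))
        + (Matrix.of fun a b : ι => ((1:ℂ) * star (1:ℂ)) • blk 𝒮 X r (Sum.inl a) (Sum.inr b))
        + ((Matrix.of fun a b : ι => ((1:ℂ) * star (1:ℂ)) • blk 𝒮 X r (Sum.inr a) (Sum.inl b))
        + Matrix.of fun a b : ι => ((1:ℂ) * star (1:ℂ)) • blk 𝒮 X r (Sum.inr a) (Sum.inr b))
      = ((2 : ℝ) : ℂ) • (X + (r : ℂ) • diagonal fun _ => 𝒮.unit) := by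
    ext a b
    simp only [blk, Matrix.add_apply, Matrix.of_apply, fromBlocks_apply₁₁, fromBlocks_apply₁₂,
      fromBlocks_apply₂₁, fromBlocks_apply₂₂, Matrix.smul_apply, one_mul, star_one, one_smul,
      hsa]
    push_cast
    module
  rw [hsum] at h
  have h2 := pos_smul 𝒮 (show (0:ℝ) ≤ 1/2 by norm_num) h
  rw [smul_smul, show (((1:ℝ)/2 : ℝ) : ℂ) * ((2:ℝ) : ℂ) = 1 by push_cast; norm_num,
    one_smul] at h2
  exact h2

/-- The norm of an operator system, as a real number. -/
noncomputable def osNorm (𝒮 : OpSys V) (X : Matrix ι κ V) : ℝ :=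
  sInf {r : ℝ | 0 ≤ r ∧ 𝒮.normLE X r}

lemma osNorm_set_nonempty (𝒮 : OpSys V) (X : Matrix ι κ V) :
    {r : ℝ | 0 ≤ r ∧ 𝒮.normLE X r}.Nonempty := normLE_exists 𝒮 X

lemma osNorm_bddBelow (𝒮 : OpSys V) (X : Matrix ι κ V) :
    BddBelow {r : ℝ | 0 ≤ r ∧ 𝒮.normLE X r} := ⟨0, fun r hr => hr.1⟩

lemma osNorm_nonneg (𝒮 : OpSys V) (X : Matrix ι κ V) : 0 ≤ osNorm 𝒮 X :=
  le_csInf (osNorm_set_nonempty 𝒮 X) fun r hr => hr.1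

lemma osNorm_le (𝒮 : OpSys V) {X : Matrix ι κ V} {r : ℝ} (hr : 0 ≤ r)
    (h : 𝒮.normLE X r) : osNorm 𝒮 X ≤ r := csInf_le (osNorm_bddBelow 𝒮 X) ⟨hr, h⟩

lemma normLE_osNorm (𝒮 : OpSys V) (X : Matrix ι κ V) : 𝒮.normLE X (osNorm 𝒮 X) := by
  refine normLE_arch 𝒮 fun ε hε => ?_
  obtain ⟨a, ha, hlt⟩ := Real.lt_sInf_add_pos (osNorm_set_nonempty 𝒮 X) hε
  exact normLE_mono 𝒮 ha.2 (le_of_lt hlt)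

end LiftAux

end ProofAux3
section ProofAux4

open Matrix

set_option linter.unusedSectionVars false
set_option linter.unusedVariables false
set_option maxHeartbeats 1000000

namespace LiftAux

variable {V W : Type}
variable [AddCommGroup V] [Module ℂ V] [StarAddMonoid V] [StarModule ℂ V]
variable [AddCommGroup W] [Module ℂ W] [StarAddMonoid W] [StarModule ℂ W]
variable {ι κ : Type} [Fintype ι] [DecidableEq ι] [Fintype κ] [DecidableEq κ]
variable {𝒮 : OpSys V} {𝒯 : OpSys W} {Φ : V →ₗ[ℂ] W}

lemma phi_star_selfadj (hucp : IsUCPmap 𝒮 𝒯 Φ) {h : V} (hh : star h = h) :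
    star (Φ h) = Φ h := by
  obtain ⟨r, hr, hpos⟩ := 𝒮.order_unit (Fin 1) (Matrix.of fun _ _ => h)
    (by ext a b; simp [mstar_apply, hh])
  have hM : star (Φ ((r : ℂ) • 𝒮.unit - h)) = Φ ((r : ℂ) • 𝒮.unit - h) := by
    have hst := 𝒯.pos_star (Fin 1) _ (hucp.2 (Fin 1) _ hpos)
    have h00 := congrFun (congrFun hst 0) 0
    simpa [mstar_apply, Matrix.map_apply, Matrix.sub_apply, Matrix.smul_apply,
      Matrix.diagonal_apply_eq] using h00
  have hA : star (Φ ((r : ℂ) • 𝒮.unit)) = Φ ((r : ℂ) • 𝒮.unit) := by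
    rw [_root_.map_smul, star_smul, Complex.star_def, Complex.conj_ofReal, hucp.1, 𝒯.unit_star]
  rw [_root_.map_sub, star_sub, hA, sub_right_inj] at hM
  exact hM

lemma phi_star (hucp : IsUCPmap 𝒮 𝒯 Φ) (x : V) : Φ (star x) = star (Φ x) := by
  have s1 : (starRingEnd ℂ) ((1 : ℂ)/2) = (1 : ℂ)/2 := by
    rw [_root_.map_div₀, _root_.map_one, _root_.map_ofNat]
  have s2 : (starRingEnd ℂ) (((1 : ℂ)/2) * Complex.I) = -(((1 : ℂ)/2) * Complex.I) := by
    rw [_root_.map_mul, Complex.conj_I, s1, mul_neg]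
  have hIsq : ((1 : ℂ)/2) * Complex.I * Complex.I = -(1/2 : ℂ) := by
    rw [mul_assoc, Complex.I_mul_I, mul_neg, mul_one]
  obtain ⟨a, ha_def⟩ : ∃ a, a = x + star x := ⟨_, rfl⟩
  obtain ⟨y, hy_def⟩ : ∃ y, y = Complex.I • (x - star x) := ⟨_, rfl⟩
  have ha : star a = a := by
    rw [ha_def, star_add, star_star, add_comm]
  have hb : star y = y := by
    rw [hy_def, star_smul, star_sub, star_star, Complex.star_def, Complex.conj_I]
    module
  have hsa := phi_star_selfadj hucp ha
  have hsb := phi_star_selfadj hucp hb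
  have hxa : star x = ((1 : ℂ)/2) • a + (((1 : ℂ)/2) * Complex.I) • y := by
    rw [hy_def, ha_def, smul_smul, hIsq]
    module
  have hxx : x = ((1 : ℂ)/2) • a - (((1 : ℂ)/2) * Complex.I) • y := by
    rw [hy_def, ha_def, smul_smul, hIsq]
    module
  rw [hxa, _root_.map_add, _root_.map_smul, _root_.map_smul]
  conv_rhs => rw [hxx]
  rw [_root_.map_sub, _root_.map_smul, _root_.map_smul, star_sub, star_smul, star_smul, hsa, hsb
    ]
  simp only [Complex.star_def, s1, s2]
  module

lemma map_mstar (hucp : IsUCPmap 𝒮 𝒯 Φ) (X : Matrix ι κ V) :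
    (mstar X).map Φ = mstar (X.map Φ) := by
  ext i j
  simp [mstar_apply, Matrix.map_apply, phi_star hucp]

lemma map_smul_diag_entry (hucp : IsUCPmap 𝒮 𝒯 Φ) (r : ℝ) (i j : ι) :
    Φ (((r : ℂ) • diagonal fun _ => 𝒮.unit) i j)
      = ((r : ℂ) • diagonal fun _ : ι => 𝒯.unit) i j := by
  rcases eq_or_ne i j with rfl | h
  · simp [Matrix.smul_apply, Matrix.diagonal_apply_eq, _root_.map_smul, hucp.1]
  · simp [Matrix.smul_apply, Matrix.diagonal_apply_ne _ h]

lemma map_blk (hucp : IsUCPmap 𝒮 𝒯 Φ) (X : Matrix ι κ V) (r : ℝ) :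
    (blk 𝒮 X r).map Φ = blk 𝒯 (X.map Φ) r := by
  ext i j
  rcases i with i | i <;> rcases j with j | j
  · simpa only [Matrix.map_apply, blk, fromBlocks_apply₁₁] using map_smul_diag_entry hucp r i j
  · simp [Matrix.map_apply, blk]
  · simp [Matrix.map_apply, blk, mstar_apply, phi_star hucp]
  · simpa only [Matrix.map_apply, blk, fromBlocks_apply₂₂] using map_smul_diag_entry hucp r i j

lemma map_normLE (hucp : IsUCPmap 𝒮 𝒯 Φ) {X : Matrix ι κ V} {r : ℝ}
    (h : 𝒮.normLE X r) : 𝒯.normLE (X.map Φ) r := by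
  have h2 := hucp.2 _ _ (show blk 𝒮 X r ∈ 𝒮.pos _ from h)
  rw [map_blk hucp] at h2
  exact h2

lemma mapm_add (X Y : Matrix ι κ V) : (X + Y).map Φ = X.map Φ + Y.map Φ := by
  ext i j; simp [Matrix.map_apply]

lemma mapm_sub (X Y : Matrix ι κ V) : (X - Y).map Φ = X.map Φ - Y.map Φ := by
  ext i j; simp [Matrix.map_apply]

lemma mapm_smul (c : ℂ) (X : Matrix ι κ V) : (c • X).map Φ = c • X.map Φ := by
  ext i j; simp [Matrix.map_apply]

lemma mapm_diag (hucp : IsUCPmap 𝒮 𝒯 Φ) (ε : ℝ) :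
    (((ε : ℂ) • Matrix.diagonal fun _ : ι => 𝒮.unit).map Φ)
      = (ε : ℂ) • Matrix.diagonal fun _ : ι => 𝒯.unit := by
  ext i j
  simpa only [Matrix.map_apply] using map_smul_diag_entry hucp ε i j

lemma normLE_sum (𝒮 : OpSys V) {A : Type} (s : Finset A) (f : A → Matrix ι κ V) (g : A → ℝ)
    (h : ∀ a ∈ s, 𝒮.normLE (f a) (g a)) :
    𝒮.normLE (∑ a ∈ s, f a) (∑ a ∈ s, g a) := by
  classical
  induction s using Finset.cons_induction with
  | empty => simpa using normLE_zero (ι := ι) (κ := κ) 𝒮 le_rfl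
  | cons a s ha ih =>
    rw [Finset.sum_cons, Finset.sum_cons]
    exact normLE_add 𝒮 (h a (Finset.mem_cons_self a s))
      (ih fun b hb => h b (Finset.mem_cons_of_mem hb))

end LiftAux

end ProofAux4
section ProofAux5

open Matrix

set_option linter.unusedSectionVars false
set_option linter.unusedVariables false
set_option maxHeartbeats 1000000

namespace LiftAux

variable {V W : Type}
variable [AddCommGroup V] [Module ℂ V] [StarAddMonoid V] [StarModule ℂ V]
variable [AddCommGroup W] [Module ℂ W] [StarAddMonoid W] [StarModule ℂ W]

/-- The normed group structure induced by an operator system on `Mₙ(V)`. -/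
@[reducible] noncomputable def osNormedGroup (𝒮 : OpSys V) (n : ℕ) :
    NormedAddCommGroup (Matrix (Fin n) (Fin n) V) :=
  AddGroupNorm.toNormedAddCommGroup
    { toFun := osNorm 𝒮
      map_zero' := le_antisymm (osNorm_le 𝒮 le_rfl (normLE_zero 𝒮 le_rfl)) (osNorm_nonneg 𝒮 0)
      add_le' := fun X Y => osNorm_le 𝒮 (add_nonneg (osNorm_nonneg 𝒮 X) (osNorm_nonneg 𝒮 Y))
        (normLE_add 𝒮 (normLE_osNorm 𝒮 X) (normLE_osNorm 𝒮 Y))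
      neg' := fun X => le_antisymm
        (osNorm_le 𝒮 (osNorm_nonneg 𝒮 X) (normLE_neg 𝒮 (normLE_osNorm 𝒮 X)))
        (osNorm_le 𝒮 (osNorm_nonneg 𝒮 (-X))
          (by simpa using normLE_neg 𝒮 (normLE_osNorm 𝒮 (-X))))
      eq_zero_of_map_eq_zero' := fun X hX => eq_zero_of_normLE 𝒮 fun ε hε =>
        normLE_mono 𝒮 (normLE_osNorm 𝒮 X) (by rw [show osNorm 𝒮 X = 0 from hX]; exact le_of_lt hε) }

lemma osNormedGroup_norm (𝒮 : OpSys V) (n : ℕ) (X : Matrix (Fin n) (Fin n) V) :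
    @norm _ (osNormedGroup 𝒮 n).toNorm X = osNorm 𝒮 X := rfl

lemma osComplete (𝒮 : OpSys V) (hS : 𝒮.CompleteNorms) (n : ℕ) :
    @CompleteSpace (Matrix (Fin n) (Fin n) V)
      (osNormedGroup 𝒮 n).toUniformSpace := by
  letI := osNormedGroup 𝒮 n
  apply Metric.complete_of_cauchySeq_tendsto
  intro u hu
  rw [Metric.cauchySeq_iff] at hu
  have hentry : ∀ p : Fin n × Fin n, ∃ x : V, ∀ ε : ℝ, 0 < ε → ∃ N, ∀ q ≥ N,
      𝒮.elemNormLE (u q p.1 p.2 - x) ε := by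
    intro p
    apply hS
    intro ε hε
    obtain ⟨N, hN⟩ := hu ε hε
    refine ⟨N, fun a ha b hb => ?_⟩
    have hd := hN a ha b hb
    rw [dist_eq_norm] at hd
    have h2 : 𝒮.normLE (u a - u b) ε :=
      normLE_mono 𝒮 (normLE_osNorm 𝒮 _) (le_of_lt hd)
    simpa [Matrix.sub_apply] using normLE_entry 𝒮 h2 p.1 p.2
  choose x hx using hentry
  refine ⟨Matrix.of fun i j => x (i, j), ?_⟩
  rw [Metric.tendsto_atTop]
  intro ε hε
  have hε' : 0 < ε / ((n : ℝ) ^ 2 + 1) := by positivity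
  choose N hN using fun p => hx p _ hε'
  refine ⟨Finset.univ.sup N, fun m hm => ?_⟩
  have hsplit : u m - (Matrix.of fun i j => x (i, j))
      = ∑ p : Fin n × Fin n,
          single p.1 p.2 ((u m - Matrix.of fun i j => x (i, j)) p.1 p.2) :=
    (sum_single _).symm
  have hbound : 𝒮.normLE (u m - Matrix.of fun i j => x (i, j))
      (∑ _p : Fin n × Fin n, ε / ((n : ℝ) ^ 2 + 1)) := by
    rw [hsplit]
    refine normLE_sum 𝒮 Finset.univ _ _ fun p _ => ?_
    refine normLE_single 𝒮 ?_ (le_of_lt hε') p.1 p.2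
    have := hN p m (le_trans (Finset.le_sup (Finset.mem_univ p)) hm)
    simpa [Matrix.sub_apply] using this
  have hsum : (∑ _p : Fin n × Fin n, ε / ((n : ℝ) ^ 2 + 1))
      = ((n : ℝ) ^ 2) * (ε / ((n : ℝ) ^ 2 + 1)) := by
    rw [Finset.sum_const, Finset.card_univ, Fintype.card_prod, Fintype.card_fin]
    push_cast
    ring
  rw [dist_eq_norm]
  calc ‖u m - Matrix.of fun i j => x (i, j)‖
      ≤ ∑ _p : Fin n × Fin n, ε / ((n : ℝ) ^ 2 + 1) := by
        refine osNorm_le 𝒮 ?_ hbound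
        exact Finset.sum_nonneg fun _ _ => le_of_lt hε'
    _ < ε := by
        have h1 : (0 : ℝ) < (n : ℝ) ^ 2 + 1 := by positivity
        rw [hsum, mul_comm, div_mul_eq_mul_div, div_lt_iff₀ h1]
        nlinarith [sq_nonneg (n : ℝ)]

lemma bounded_lift (𝒮 : OpSys V) (𝒯 : OpSys W) (hS : 𝒮.CompleteNorms) (hT : 𝒯.CompleteNorms)
    (Φ : V →ₗ[ℂ] W) (hucp : IsUCPmap 𝒮 𝒯 Φ) (hsurj : Function.Surjective Φ) (n : ℕ) :
    ∃ C > 0, ∀ Q : Matrix (Fin n) (Fin n) W, ∃ P : Matrix (Fin n) (Fin n) V,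
      P.map Φ = Q ∧ 𝒮.normLE P (C * osNorm 𝒯 Q) := by
  classical
  letI : NormedAddCommGroup (Matrix (Fin n) (Fin n) V) := osNormedGroup 𝒮 n
  letI : NormedAddCommGroup (Matrix (Fin n) (Fin n) W) := osNormedGroup 𝒯 n
  haveI : CompleteSpace (Matrix (Fin n) (Fin n) V) := osComplete 𝒮 hS n
  haveI : CompleteSpace (Matrix (Fin n) (Fin n) W) := osComplete 𝒯 hT n
  have smul_eq : ∀ (c : ℝ) (X : Matrix (Fin n) (Fin n) V), c • X = ((c : ℝ) : ℂ) • X := by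
    intro c X
    ext i j
    rw [Matrix.smul_apply, Matrix.smul_apply, Complex.coe_smul]
  have smul_eqW : ∀ (c : ℝ) (X : Matrix (Fin n) (Fin n) W), c • X = ((c : ℝ) : ℂ) • X := by
    intro c X
    ext i j
    rw [Matrix.smul_apply, Matrix.smul_apply, Complex.coe_smul]
  have hnsm : ∀ (𝒰 : OpSys V) (c : ℝ) (X : Matrix (Fin n) (Fin n) V),
      osNorm 𝒰 (((c : ℝ) : ℂ) • X) ≤ |c| * osNorm 𝒰 X := by
    intro 𝒰 c X
    rcases le_or_gt 0 c with hc | hc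
    · rw [abs_of_nonneg hc]
      exact osNorm_le 𝒰 (mul_nonneg hc (osNorm_nonneg 𝒰 X))
        (normLE_smul 𝒰 hc (normLE_osNorm 𝒰 X))
    · rw [abs_of_neg hc]
      have he : ((c : ℝ) : ℂ) • X = -((((-c : ℝ)) : ℂ) • X) := by
        push_cast
        rw [neg_smul, neg_neg]
      rw [he]
      exact osNorm_le 𝒰 (mul_nonneg (by linarith) (osNorm_nonneg 𝒰 X))
        (normLE_neg 𝒰 (normLE_smul 𝒰 (by linarith : (0:ℝ) ≤ -c) (normLE_osNorm 𝒰 X)))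
  letI : NormedSpace ℝ (Matrix (Fin n) (Fin n) V) :=
    { (inferInstance : Module ℝ (Matrix (Fin n) (Fin n) V)) with
      norm_smul_le := fun c X => by
        rw [smul_eq c X]
        exact hnsm 𝒮 c X }
  letI : NormedSpace ℝ (Matrix (Fin n) (Fin n) W) :=
    { (inferInstance : Module ℝ (Matrix (Fin n) (Fin n) W)) with
      norm_smul_le := fun c X => by
        rw [smul_eqW c X]
        rcases le_or_gt 0 c with hc | hc
        · rw [Real.norm_eq_abs, abs_of_nonneg hc]
          exact osNorm_le 𝒯 (mul_nonneg hc (osNorm_nonneg 𝒯 X))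
            (normLE_smul 𝒯 hc (normLE_osNorm 𝒯 X))
        · rw [Real.norm_eq_abs, abs_of_neg hc]
          have he : ((c : ℝ) : ℂ) • X = -((((-c : ℝ)) : ℂ) • X) := by
            push_cast
            rw [neg_smul, neg_neg]
          rw [he]
          exact osNorm_le 𝒯 (mul_nonneg (by linarith) (osNorm_nonneg 𝒯 X))
            (normLE_neg 𝒯 (normLE_smul 𝒯 (by linarith : (0:ℝ) ≤ -c)
              (normLE_osNorm 𝒯 X))) }
  let flin : Matrix (Fin n) (Fin n) V →ₗ[ℝ] Matrix (Fin n) (Fin n) W :=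
    { toFun := fun X => X.map Φ
      map_add' := fun X Y => mapm_add X Y
      map_smul' := fun c X => by
        simp only [RingHom.id_apply]
        rw [smul_eq c X, smul_eqW c (X.map Φ), mapm_smul] }
  have hbnd : ∀ X : Matrix (Fin n) (Fin n) V, ‖flin X‖ ≤ 1 * ‖X‖ := by
    intro X
    rw [one_mul]
    exact osNorm_le 𝒯 (osNorm_nonneg 𝒮 X) (map_normLE hucp (normLE_osNorm 𝒮 X))
  let F := flin.mkContinuous 1 hbnd
  have hFsurj : Function.Surjective F := by
    intro Q
    refine ⟨Matrix.of fun i j => (hsurj (Q i j)).choose, ?_⟩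
    show (Matrix.of fun i j => (hsurj (Q i j)).choose).map Φ = Q
    ext i j
    exact (hsurj (Q i j)).choose_spec
  obtain ⟨C, hC, hlift⟩ := F.exists_preimage_norm_le hFsurj
  refine ⟨C, hC, fun Q => ?_⟩
  obtain ⟨P, hPQ, hPn⟩ := hlift Q
  exact ⟨P, hPQ, normLE_mono 𝒮 (normLE_osNorm 𝒮 P) hPn⟩

end LiftAux

end ProofAux5
open LiftAux in
/-- **(from the proof of Theorem 6.1.)** For operator systems with complete norms
and a unital completely positive surjection `Φ : S → T`, the set `C_n` is a
norm-closed cone with `Φₙ(Mₙ(S)⁺) ⊆ C_n ⊆ Mₙ(T)⁺`. -/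
theorem liftCone_closed_cone {V W : Type}
    [AddCommGroup V] [Module ℂ V] [StarAddMonoid V] [StarModule ℂ V]
    [AddCommGroup W] [Module ℂ W] [StarAddMonoid W] [StarModule ℂ W]
    (𝒮 : OpSys V) (𝒯 : OpSys W)
    (hScomp : 𝒮.CompleteNorms) (hTcomp : 𝒯.CompleteNorms)
    (Φ : V →ₗ[ℂ] W) (hucp : IsUCPmap 𝒮 𝒯 Φ) (hsurj : Function.Surjective Φ)
    (n : ℕ) :
    liftCone 𝒮 𝒯 Φ n ⊆ 𝒯.pos (Fin n) ∧
    (∀ X ∈ 𝒮.pos (Fin n), X.map Φ ∈ liftCone 𝒮 𝒯 Φ n) ∧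
    (∀ y ∈ liftCone 𝒮 𝒯 Φ n, ∀ z ∈ liftCone 𝒮 𝒯 Φ n,
      y + z ∈ liftCone 𝒮 𝒯 Φ n) ∧
    (∀ r : ℝ, 0 ≤ r → ∀ y ∈ liftCone 𝒮 𝒯 Φ n,
      (r : ℂ) • y ∈ liftCone 𝒮 𝒯 Φ n) ∧
    (∀ (u : ℕ → Matrix (Fin n) (Fin n) W) (Y : Matrix (Fin n) (Fin n) W),
      (∀ k, u k ∈ liftCone 𝒮 𝒯 Φ n) →
      (∀ ε : ℝ, 0 < ε → ∃ N, ∀ k ≥ N, 𝒯.normLE (u k - Y) ε) →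
      Y ∈ liftCone 𝒮 𝒯 Φ n) := by
  classical
  have part1 : liftCone 𝒮 𝒯 Φ n ⊆ 𝒯.pos (Fin n) := by
    intro y hy
    obtain ⟨x1, hx1pos, hx1map⟩ := hy 1 one_pos
    have himg : y + ((1 : ℝ) : ℂ) • Matrix.diagonal (fun _ => 𝒯.unit) ∈ 𝒯.pos (Fin n) := by
      have h := hucp.2 _ _ hx1pos
      rwa [mapm_add, hx1map, mapm_diag hucp] at h
    have hys : mstar y = y := by
      have hstar := 𝒯.pos_star _ _ himg
      rw [mstar_add, mstar_smul_diag] at hstar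
      exact add_right_cancel hstar
    refine 𝒯.archimedean _ _ hys fun ε hε => ?_
    obtain ⟨x, hxpos, hxmap⟩ := hy ε hε
    have h := hucp.2 _ _ hxpos
    rwa [mapm_add, hxmap, mapm_diag hucp] at h
  refine ⟨part1, ?_, ?_, ?_, ?_⟩
  · -- image of the positive cone
    intro X hX ε hε
    exact ⟨X, 𝒮.pos_add _ _ _ hX (pos_smul 𝒮 hε.le (𝒮.unit_pos _)), rfl⟩
  · -- additivity
    intro y hy z hz ε hε
    obtain ⟨x1, h1, m1⟩ := hy (ε/2) (by positivity)
    obtain ⟨x2, h2, m2⟩ := hz (ε/2) (by positivity)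
    refine ⟨x1 + x2, ?_, by rw [mapm_add, m1, m2]⟩
    have hsum := 𝒮.pos_add _ _ _ h1 h2
    have hkey : (x1 + ((ε/2 : ℝ) : ℂ) • Matrix.diagonal (fun _ => 𝒮.unit))
        + (x2 + ((ε/2 : ℝ) : ℂ) • Matrix.diagonal (fun _ => 𝒮.unit))
        = (x1 + x2) + ((ε : ℝ) : ℂ) • Matrix.diagonal (fun _ => 𝒮.unit) := by
      ext i j
      simp only [Matrix.add_apply, Matrix.smul_apply]
      push_cast
      module
    rwa [hkey] at hsum
  · -- positive scaling
    intro r hr y hy ε hε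
    rcases eq_or_lt_of_le hr with hr0 | hr0
    · refine ⟨0, ?_, ?_⟩
      · simpa using pos_smul 𝒮 hε.le (𝒮.unit_pos (Fin n))
      · rw [← hr0]
        ext i j
        simp [Matrix.map_apply]
    · obtain ⟨x, hxpos, hxmap⟩ := hy (ε/r) (by positivity)
      refine ⟨(r : ℂ) • x, ?_, by rw [mapm_smul, hxmap]⟩
      have hs := pos_smul 𝒮 hr (X := x + ((ε/r : ℝ) : ℂ) • Matrix.diagonal fun _ => 𝒮.unit) hxpos
      have hkey : (r : ℂ) • (x + ((ε/r : ℝ) : ℂ) • Matrix.diagonal fun _ => 𝒮.unit)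
          = (r : ℂ) • x + ((ε : ℝ) : ℂ) • Matrix.diagonal fun _ => 𝒮.unit := by
        rw [smul_add, smul_smul]
        have hc : (r : ℂ) * ((ε/r : ℝ) : ℂ) = ((ε : ℝ) : ℂ) := by
          push_cast
          field_simp
        rw [hc]
      rwa [hkey] at hs
  · -- norm-closedness
    intro u Y hall hconv
    obtain ⟨C, hC0, hC⟩ := bounded_lift 𝒮 𝒯 hScomp hTcomp Φ hucp hsurj n
    have hupos : ∀ k, u k ∈ 𝒯.pos (Fin n) := fun k => part1 (hall k)
    have husa : ∀ k, mstar (u k) = u k := fun k => 𝒯.pos_star _ _ (hupos k)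
    have hYsa : mstar Y = Y := by
      have hkey : ∀ ε : ℝ, 0 < ε → 𝒯.normLE (Y - mstar Y) ε := by
        intro ε hε
        obtain ⟨N, hN⟩ := hconv (ε/2) (by positivity)
        have h1 : 𝒯.normLE (u N - Y) (ε/2) := hN N le_rfl
        have h2 : 𝒯.normLE (u N - mstar Y) (ε/2) := by
          have h := normLE_mstar 𝒯 h1
          rwa [mstar_sub, husa N] at h
        have h3 := normLE_add 𝒯 (normLE_neg 𝒯 h1) h2
        have he : -(u N - Y) + (u N - mstar Y) = Y - mstar Y := by abel
        rw [he, show ε/2 + ε/2 = ε by ring] at h3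
        exact h3
      have h0 := eq_zero_of_normLE 𝒯 hkey
      rw [sub_eq_zero] at h0
      exact h0.symm
    intro ε hε
    have hδ : 0 < ε / (2*C) := by positivity
    obtain ⟨N, hN⟩ := hconv (ε/(2*C)) hδ
    have hw : 𝒯.normLE (Y - u N) (ε/(2*C)) := by
      have h := normLE_neg 𝒯 (hN N le_rfl)
      rwa [neg_sub] at h
    have hwsa : mstar (Y - u N) = Y - u N := by rw [mstar_sub, hYsa, husa]
    obtain ⟨P, hPmap, hPn⟩ := hC (Y - u N)
    have hPn2 : 𝒮.normLE P (ε/2) := by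
      refine normLE_mono 𝒮 hPn ?_
      have hos : osNorm 𝒯 (Y - u N) ≤ ε/(2*C) := osNorm_le 𝒯 hδ.le hw
      calc C * osNorm 𝒯 (Y - u N) ≤ C * (ε/(2*C)) :=
            mul_le_mul_of_nonneg_left hos hC0.le
        _ = ε/2 := by field_simp
    obtain ⟨h, hh_def⟩ : ∃ h, h = ((1/2 : ℝ) : ℂ) • (P + mstar P) := ⟨_, rfl⟩
    have hhsa : mstar h = h := by
      rw [hh_def, mstar_smul, mstar_add, mstar_mstar, Complex.star_def, Complex.conj_ofReal,
        add_comm]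
    have hhn : 𝒮.normLE h (ε/2) := by
      have hp2 := normLE_add 𝒮 hPn2 (normLE_mstar 𝒮 hPn2)
      have hs := normLE_smul 𝒮 (by norm_num : (0:ℝ) ≤ 1/2) hp2
      rw [← hh_def, show (1/2 : ℝ) * (ε/2 + ε/2) = ε/2 by ring] at hs
      exact hs
    have hhmap : h.map Φ = Y - u N := by
      rw [hh_def, mapm_smul, mapm_add, map_mstar hucp, hPmap, hwsa]
      ext i j
      simp only [Matrix.smul_apply, Matrix.add_apply]
      push_cast
      module
    have hpos_h : h + ((ε/2 : ℝ) : ℂ) • Matrix.diagonal (fun _ => 𝒮.unit) ∈ 𝒮.pos (Fin n) :=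
      selfadj_small 𝒮 hhsa hhn
    obtain ⟨x, hxpos, hxmap⟩ := hall N (ε/2) (by positivity)
    refine ⟨x + h, ?_, ?_⟩
    · have hsum := 𝒮.pos_add _ _ _ hxpos hpos_h
      have hkey : (x + ((ε/2 : ℝ) : ℂ) • Matrix.diagonal (fun _ => 𝒮.unit))
          + (h + ((ε/2 : ℝ) : ℂ) • Matrix.diagonal (fun _ => 𝒮.unit))
          = (x + h) + ((ε : ℝ) : ℂ) • Matrix.diagonal (fun _ => 𝒮.unit) := by
        ext i j
        simp only [Matrix.add_apply, Matrix.smul_apply]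
        push_cast
        module
      rwa [hkey] at hsum
    · rw [mapm_add, hxmap, hhmap]
      abel
end
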